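/- arXiv:2106.02060 — 6 statements merged into one kernel-verified Lean document; each statement's English description precedes it below -/
import Mathlib

section
/- Let τ > 0 and suppose there exist 0 < z₁ < z₂ < z₃ such that h(u, τ) > 0 for u ∈ (0, z₁) ∪ (z₂, z₃) and h(u, τ) < 0 for u ∈ (z₁, z₂) ∪ (z₃, ∞), and suppose ∂h/∂u(z₂, τ) > 0. Define H(u) := ∫_{z₂}^{u} h(s, τ)·(δ + γτ/s²) ds. Suppose m̄ ∈ (z₁, z₂) and M : (m̄, z₂) → (z₂, z₃) satisfies H(M(m)) = H(m) for all m ∈ (m̄, z₂) and M(m) → z₂ as m → z₂⁻. Then lim_{m → z₂⁻} ∫_{m}^{M(m)} (δ + γτ/u²)/√(H(m) − H(u)) du = π·√( 2(δ + γτ/z₂²) / (∂h/∂u(z₂, τ)) ). -/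
open Set Filter Topology

/-- The nonlinearity `h(u,τ) = u(a₁ − b₁u) − c₁τ − (γτ/u)(a₂ − b₂u − c₂τ/u)`. -/
noncomputable def hfun (a₁ a₂ b₁ b₂ c₁ c₂ γ : ℝ) (u τ : ℝ) : ℝ :=
  u * (a₁ - b₁ * u) - c₁ * τ - (γ * τ / u) * (a₂ - b₂ * u - c₂ * τ / u)

open MeasureTheory

noncomputable def ginv (G : ℝ → ℝ) (c d v : ℝ) : ℝ :=
  max c (sSup {u | u ∈ Icc c d ∧ G u ≤ v})

lemma ginv_mem {G : ℝ → ℝ} {c d : ℝ} (hc : 0 ≤ c) (hcd : c ≤ d) (v : ℝ) :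
    ginv G c d v ∈ Icc c d := by
  refine ⟨le_max_left _ _, max_le hcd ?_⟩
  rcases eq_empty_or_nonempty {u | u ∈ Icc c d ∧ G u ≤ v} with h | h
  · rw [h]; simpa using hc.trans hcd
  · exact csSup_le h (fun u hu => hu.1.2)

lemma ginv_mono {G : ℝ → ℝ} {c d : ℝ} (hc : 0 ≤ c) : Monotone (ginv G c d) := by
  intro v₁ v₂ h
  rcases eq_empty_or_nonempty {u | u ∈ Icc c d ∧ G u ≤ v₁} with he | hne
  · unfold ginv
    rw [he]
    rw [Real.sSup_empty]
    exact le_trans (max_le le_rfl hc) (le_max_left _ _)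
  · apply max_le_max le_rfl
    have hbdd : BddAbove {u | u ∈ Icc c d ∧ G u ≤ v₂} :=
      (bddAbove_Icc (a := c) (b := d)).mono (fun u hu => hu.1)
    exact csSup_le_csSup hbdd hne (fun u hu => ⟨hu.1, hu.2.trans h⟩)

lemma ginv_leftInv {G : ℝ → ℝ} {c d u : ℝ} (hmono : StrictMonoOn G (Icc c d))
    (hu : u ∈ Icc c d) : ginv G c d (G u) = u := by
  have hset : {x | x ∈ Icc c d ∧ G x ≤ G u} = Icc c u := by
    ext x
    constructor
    · rintro ⟨hx, hGx⟩
      refine ⟨hx.1, ?_⟩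
      by_contra hlt
      push_neg at hlt
      exact absurd (hmono hu hx hlt) (not_lt.2 hGx)
    · rintro ⟨hcx, hxu⟩
      have hx : x ∈ Icc c d := ⟨hcx, hxu.trans hu.2⟩
      exact ⟨hx, hmono.monotoneOn hx hu hxu⟩
  unfold ginv
  rw [hset, csSup_Icc hu.1]
  exact max_eq_right hu.1

lemma ginv_tendsto {G : ℝ → ℝ} {c d z : ℝ} (hc : 0 ≤ c)
    (hmono : StrictMonoOn G (Icc c d)) (hz : z ∈ Ioo c d) :
    Tendsto (ginv G c d) (𝓝 (G z)) (𝓝 z) := by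
  have hzIcc : z ∈ Icc c d := ⟨hz.1.le, hz.2.le⟩
  rw [tendsto_order]
  constructor
  · intro b hb
    rcases lt_or_ge b c with hbc | hcb
    · exact Eventually.of_forall (fun v => lt_of_lt_of_le hbc (ginv_mem hc (hzIcc.1.trans hzIcc.2) v).1)
    · set p := (max b c + z) / 2 with hp
      have hbp : b < p := by
        have : max b c < z := max_lt hb hz.1
        have := le_max_left b c
        simp only [hp]; linarith
      have hpz : p < z := by
        have : max b c < z := max_lt hb hz.1
        simp only [hp]; linarith
      have hpIcc : p ∈ Icc c d := ⟨by have := le_max_right b c; simp only [hp]; linarith [hz.2],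
        by simp only [hp]; linarith [hz.2, le_max_left b c, max_lt hb hz.1]⟩
      have hGp : G p < G z := hmono hpIcc hzIcc hpz
      filter_upwards [Ioi_mem_nhds hGp] with v hv
      calc b < p := hbp
        _ = ginv G c d (G p) := (ginv_leftInv hmono hpIcc).symm
        _ ≤ ginv G c d v := ginv_mono hc (le_of_lt hv)
  · intro b hb
    rcases lt_or_ge d b with hdb | hbd
    · exact Eventually.of_forall (fun v => lt_of_le_of_lt (ginv_mem hc (hzIcc.1.trans hzIcc.2) v).2 hdb)
    · set p := (z + min b d) / 2 with hp
      have hzmin : z < min b d := lt_min hb hz.2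
      have hpb : p < b := by have := min_le_left b d; simp only [hp]; linarith
      have hzp : z < p := by simp only [hp]; linarith
      have hpIcc : p ∈ Icc c d := ⟨by simp only [hp]; linarith [hz.1, hzmin],
        by have := min_le_right b d; simp only [hp]; linarith⟩
      have hGp : G z < G p := hmono hzIcc hpIcc hzp
      filter_upwards [Iio_mem_nhds hGp] with v hv
      calc ginv G c d v ≤ ginv G c d (G p) := ginv_mono hc (le_of_lt hv)
        _ = p := ginv_leftInv hmono hpIcc
        _ < b := hpb

-- sin image
lemma sin_image_Ioo : Real.sin '' (Ioo (-(Real.pi/2)) (Real.pi/2)) = Ioo (-1 : ℝ) 1 := by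
  apply Subset.antisymm
  · rintro v ⟨x, hx, rfl⟩
    have h1 : Real.sin x < Real.sin (Real.pi/2) := by
      apply Real.strictMonoOn_sin ⟨le_of_lt hx.1, le_of_lt hx.2⟩ ⟨by linarith [hx.1, hx.2, Real.pi_pos], le_refl _⟩ hx.2
    have h2 : Real.sin (-(Real.pi/2)) < Real.sin x := by
      apply Real.strictMonoOn_sin ⟨le_refl _, by linarith [Real.pi_pos]⟩ ⟨le_of_lt hx.1, le_of_lt hx.2⟩ hx.1
    rw [Real.sin_pi_div_two] at h1
    rw [Real.sin_neg, Real.sin_pi_div_two] at h2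
    exact ⟨by linarith, h1⟩
  · have := intermediate_value_Ioo (a := -(Real.pi/2)) (b := Real.pi/2)
      (by linarith [Real.pi_pos]) (Real.continuous_sin.continuousOn)
    rwa [Real.sin_neg, Real.sin_pi_div_two] at this

lemma aux_cov_sin (φ : ℝ → ℝ) :
    ∫ v in Ioo (-1:ℝ) 1, φ v = ∫ x in Ioo (-(Real.pi/2)) (Real.pi/2), |Real.cos x| • φ (Real.sin x) := by
  rw [← sin_image_Ioo]
  exact integral_image_eq_integral_abs_deriv_smul measurableSet_Ioo
    (fun x _ => (Real.hasDerivAt_sin x).hasDerivWithinAt)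
    (Real.injOn_sin.mono Ioo_subset_Icc_self) φ

lemma aux_ptwise (C : ℝ) {x : ℝ} (hx : x ∈ Ioo (-(Real.pi/2)) (Real.pi/2)) :
    |Real.cos x| • (C / Real.sqrt (1 - Real.sin x ^ 2)) = C := by
  have hc : 0 < Real.cos x := Real.cos_pos_of_mem_Ioo hx
  have h1 : 1 - Real.sin x ^ 2 = Real.cos x ^ 2 := by
    have := Real.sin_sq_add_cos_sq x; linarith
  rw [h1, Real.sqrt_sq hc.le, abs_of_pos hc, smul_eq_mul]
  field_simp

lemma aux_pi_integral (C : ℝ) :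
    ∫ s in Ioo (-1:ℝ) 1, C / Real.sqrt (1 - s ^ 2) = C * Real.pi := by
  rw [aux_cov_sin (fun v => C / Real.sqrt (1 - v ^ 2))]
  rw [setIntegral_congr_fun measurableSet_Ioo (fun x hx => aux_ptwise C hx)]
  simp only [setIntegral_const, smul_eq_mul, Real.volume_Ioo]
  rw [measureReal_def, Real.volume_Ioo, show Real.pi/2 - (-(Real.pi/2)) = Real.pi by ring]
  rw [ENNReal.toReal_ofReal Real.pi_pos.le]
  ring

lemma aux_pi_integrable (C : ℝ) :
    IntegrableOn (fun s => C / Real.sqrt (1 - s ^ 2)) (Ioo (-1:ℝ) 1) := by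
  rw [← sin_image_Ioo]
  rw [integrableOn_image_iff_integrableOn_abs_deriv_smul measurableSet_Ioo
    (fun x _ => (Real.hasDerivAt_sin x).hasDerivWithinAt)
    (Real.injOn_sin.mono Ioo_subset_Icc_self)]
  apply (integrableOn_const (C := C) measure_Ioo_lt_top.ne).congr_fun
    (fun x hx => (aux_ptwise C hx).symm) measurableSet_Ioo

set_option maxHeartbeats 2000000 in
/-- The key time-map limit in the proof of Proposition 6.2: as the shooting level
`m` approaches the middle zero `z₂` from below, the weighted singular integral
`∫ₘ^{M(m)} (δ + γτ/u²)/√(H(m) − H(u)) du` converges to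
`π √(2(δ + γτ/z₂²)/h_u(z₂,τ))`. -/
theorem stmt_11 (a₁ a₂ b₁ b₂ c₁ c₂ γ δ : ℝ)
    (ha₁ : 0 < a₁) (ha₂ : 0 < a₂) (hb₁ : 0 < b₁) (hb₂ : 0 < b₂)
    (hc₁ : 0 < c₁) (hc₂ : 0 < c₂) (hγ : 0 < γ) (hδ : 0 < δ)
    (τ : ℝ) (hτ : 0 < τ)
    (z₁ z₂ z₃ : ℝ) (hz₁ : 0 < z₁) (hz₁₂ : z₁ < z₂) (hz₂₃ : z₂ < z₃)
    (hpos : ∀ u : ℝ, u ∈ Ioo 0 z₁ ∪ Ioo z₂ z₃ →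
      0 < hfun a₁ a₂ b₁ b₂ c₁ c₂ γ u τ)
    (hneg : ∀ u : ℝ, u ∈ Ioo z₁ z₂ ∪ Ioi z₃ →
      hfun a₁ a₂ b₁ b₂ c₁ c₂ γ u τ < 0)
    (hu : ℝ) (hder : HasDerivAt (fun u => hfun a₁ a₂ b₁ b₂ c₁ c₂ γ u τ) hu z₂)
    (hupos : 0 < hu)
    (H : ℝ → ℝ)
    (hH : ∀ u : ℝ, H u = ∫ s in z₂..u,
      hfun a₁ a₂ b₁ b₂ c₁ c₂ γ s τ * (δ + γ * τ / s ^ 2))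
    (mbar : ℝ) (hmbar : mbar ∈ Ioo z₁ z₂)
    (M : ℝ → ℝ)
    (hM : ∀ m ∈ Ioo mbar z₂, M m ∈ Ioo z₂ z₃ ∧ H (M m) = H m)
    (hMlim : Tendsto M (𝓝[<] z₂) (𝓝 z₂)) :
    Tendsto (fun m => ∫ u in m..M m,
        (δ + γ * τ / u ^ 2) / Real.sqrt (H m - H u))
      (𝓝[<] z₂)
      (𝓝 (Real.pi * Real.sqrt (2 * (δ + γ * τ / z₂ ^ 2) / hu))) := by
  have hz₂pos : 0 < z₂ := hz₁.trans hz₁₂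
  set w : ℝ → ℝ := fun u => δ + γ * τ / u ^ 2 with hw_def
  set h0 : ℝ → ℝ := fun u => hfun a₁ a₂ b₁ b₂ c₁ c₂ γ u τ with hh0_def
  set f : ℝ → ℝ := fun s => h0 s * w s with hf_def
  have hH' : ∀ u : ℝ, H u = ∫ s in z₂..u, f s := hH
  -- basic positivity / continuity
  have hw_pos : ∀ u : ℝ, u ≠ 0 → 0 < w u := by
    intro u hu0
    have : 0 < u ^ 2 := by positivity
    have : 0 < γ * τ / u ^ 2 := by positivity
    simp only [hw_def]; linarith
  have hw_cont : ∀ u : ℝ, u ≠ 0 → ContinuousAt w u := by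
    intro u hu0
    simp only [hw_def]
    exact continuousAt_const.add (continuousAt_const.div (continuousAt_pow u 2) (by positivity))
  have h0_cont : ∀ u : ℝ, u ≠ 0 → ContinuousAt h0 u := by
    intro u hu0
    simp only [hh0_def]
    unfold hfun
    fun_prop (disch := assumption)
  have hf_cont : ∀ u : ℝ, u ≠ 0 → ContinuousAt f u := by
    intro u hu0
    exact (h0_cont u hu0).mul (hw_cont u hu0)
  have h0z₂ : h0 z₂ = 0 := by
    have hca : ContinuousAt h0 z₂ := h0_cont z₂ (ne_of_gt hz₂pos)
    have hle : h0 z₂ ≤ 0 := by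
      have hne : (𝓝[Ioo z₁ z₂] z₂).NeBot := by
        rw [← mem_closure_iff_nhdsWithin_neBot, closure_Ioo (ne_of_lt hz₁₂)]
        exact ⟨hz₁₂.le, le_refl _⟩
      refine le_of_tendsto (x := 𝓝[Ioo z₁ z₂] z₂) (hca.continuousWithinAt.tendsto) ?_
      exact eventually_nhdsWithin_of_forall (fun x hx => (hneg x (Or.inl hx)).le)
    have hge : 0 ≤ h0 z₂ := by
      have hne : (𝓝[Ioo z₂ z₃] z₂).NeBot := by
        rw [← mem_closure_iff_nhdsWithin_neBot, closure_Ioo (ne_of_lt hz₂₃)]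
        exact ⟨le_refl _, hz₂₃.le⟩
      refine ge_of_tendsto (x := 𝓝[Ioo z₂ z₃] z₂) (hca.continuousWithinAt.tendsto) ?_
      exact eventually_nhdsWithin_of_forall (fun x hx => (hpos x (Or.inr hx)).le)
    linarith
  -- FTC: H' = f on Ioi 0
  have hf_contOn : ∀ s : Set ℝ, s ⊆ Ioi 0 → ContinuousOn f s := by
    intro s hs x hx
    exact (hf_cont x (ne_of_gt (hs hx))).continuousWithinAt
  have hf_ii : ∀ u : ℝ, 0 < u → IntervalIntegrable f volume z₂ u := by
    intro u hu0
    apply ContinuousOn.intervalIntegrable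
    apply hf_contOn
    intro x hx
    rcases le_total z₂ u with h | h
    · rw [uIcc_of_le h] at hx; exact lt_of_lt_of_le hz₂pos hx.1
    · rw [uIcc_of_ge h] at hx; exact lt_of_lt_of_le hu0 hx.1
  have Hderiv : ∀ u : ℝ, 0 < u → HasDerivAt H (f u) u := by
    intro u hu0
    have heq : H = fun x => ∫ s in z₂..x, f s := funext hH'
    rw [heq]
    apply intervalIntegral.integral_hasDerivAt_right (hf_ii u hu0)
    · exact ((hf_contOn (Ioi 0) (Subset.refl _)).stronglyMeasurableAtFilter isOpen_Ioi u hu0)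
    · exact hf_cont u (ne_of_gt hu0)
  have Hz₂ : H z₂ = 0 := by rw [hH' z₂, intervalIntegral.integral_same]
  -- sign of f on the two side intervals
  have hf_neg : ∀ u : ℝ, u ∈ Ioo z₁ z₂ → f u < 0 := by
    intro u huI
    have h1 : h0 u < 0 := hneg u (Or.inl huI)
    have h2 : 0 < w u := hw_pos u (by nlinarith [huI.1])
    exact mul_neg_of_neg_of_pos h1 h2
  have hf_pos : ∀ u : ℝ, u ∈ Ioo z₂ z₃ → 0 < f u := by
    intro u huI
    have h1 : 0 < h0 u := hpos u (Or.inr huI)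
    have h2 : 0 < w u := hw_pos u (by nlinarith [huI.1])
    exact mul_pos h1 h2
  have Hpos : ∀ u : ℝ, u ∈ Ioo z₁ z₂ ∪ Ioo z₂ z₃ → 0 < H u := by
    rintro u (huI | huI)
    · have hii : IntervalIntegrable (fun s => -f s) volume u z₂ :=
        ((hf_ii u (hz₁.trans huI.1)).symm).neg
      have hposint : 0 < ∫ s in u..z₂, -f s := by
        apply intervalIntegral.intervalIntegral_pos_of_pos_on hii ?_ huI.2
        intro x hx
        have : f x < 0 := hf_neg x ⟨huI.1.trans hx.1, hx.2⟩
        linarith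
      rw [intervalIntegral.integral_neg] at hposint
      rw [hH' u, intervalIntegral.integral_symm]
      linarith
    · have hposint : 0 < ∫ s in z₂..u, f s := by
        apply intervalIntegral.intervalIntegral_pos_of_pos_on
          (hf_ii u (hz₂pos.trans huI.1)) ?_ huI.1
        intro x hx
        exact hf_pos x ⟨hx.1, hx.2.trans huI.2⟩
      rw [hH' u]; exact hposint
  -- ratio limits
  have ratio1 : Tendsto (fun u => f u / (u - z₂)) (𝓝[≠] z₂) (𝓝 (hu * w z₂)) := by
    have hslope : Tendsto (slope h0 z₂) (𝓝[≠] z₂) (𝓝 hu) :=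
      hasDerivAt_iff_tendsto_slope.mp hder
    have hwlim : Tendsto w (𝓝[≠] z₂) (𝓝 (w z₂)) :=
      ((hw_cont z₂ (ne_of_gt hz₂pos)).tendsto).mono_left nhdsWithin_le_nhds
    have := hslope.mul hwlim
    refine this.congr' ?_
    filter_upwards [self_mem_nhdsWithin] with x hx
    have hxne : x - z₂ ≠ 0 := sub_ne_zero.2 hx
    rw [slope_def_field, h0z₂]
    simp only [hf_def, sub_zero, div_mul_eq_mul_div]
  set k : ℝ := hu * w z₂ / 2 with hk_def
  have hwz₂pos : 0 < w z₂ := hw_pos z₂ (ne_of_gt hz₂pos)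
  have hk : 0 < k := by simp only [hk_def]; positivity
  have hsk : 0 < Real.sqrt k := Real.sqrt_pos.2 hk
  have ratio2 : Tendsto (fun u => H u / (u - z₂) ^ 2) (𝓝[≠] z₂) (𝓝 k) := by
    apply HasDerivAt.lhopital_zero_nhdsNE (f' := f) (g' := fun x => 2 * (x - z₂))
    · filter_upwards [eventually_mem_nhdsWithin,
        eventually_nhdsWithin_of_eventually_nhds (eventually_gt_nhds hz₂pos)] with x _ hx0
      exact Hderiv x hx0
    · filter_upwards with x
      have h1 : HasDerivAt (fun y : ℝ => y - z₂) 1 x := (hasDerivAt_id x).sub_const z₂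
      have := h1.fun_pow 2
      simpa using this
    · filter_upwards [self_mem_nhdsWithin] with x hx
      have : x - z₂ ≠ 0 := sub_ne_zero.2 hx
      positivity
    · have : Tendsto H (𝓝 z₂) (𝓝 0) := by
        have := (Hderiv z₂ hz₂pos).continuousAt.tendsto
        rwa [Hz₂] at this
      exact this.mono_left nhdsWithin_le_nhds
    · have : Tendsto (fun x : ℝ => (x - z₂) ^ 2) (𝓝 z₂) (𝓝 0) := by
        have : ContinuousAt (fun x : ℝ => (x - z₂) ^ 2) z₂ := by fun_prop
        have h2 := this.tendsto
        simpa using h2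
      exact this.mono_left nhdsWithin_le_nhds
    · have heq : ∀ᶠ x in 𝓝[≠] z₂, f x / (x - z₂) * (1/2) = f x / (2 * (x - z₂)) := by
        filter_upwards [self_mem_nhdsWithin] with x hx
        have : x - z₂ ≠ 0 := sub_ne_zero.2 hx
        rw [div_mul_div_comm, mul_one, mul_comm (x - z₂) 2]
      have := ratio1.mul_const (1/2 : ℝ)
      rw [show hu * w z₂ * (1/2) = k by simp only [hk_def]; ring] at this
      exact this.congr' heq
  -- the diffeomorphism G
  set G : ℝ → ℝ := fun u => if z₂ ≤ u then Real.sqrt (H u) else -Real.sqrt (H u) with hG_def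
  have Gz₂ : G z₂ = 0 := by simp [hG_def, Hz₂]
  have Hnonneg : ∀ u : ℝ, u ∈ Ioo z₁ z₃ → 0 ≤ H u := by
    intro u huI
    rcases lt_trichotomy u z₂ with h | h | h
    · exact (Hpos u (Or.inl ⟨huI.1, h⟩)).le
    · rw [h, Hz₂]
    · exact (Hpos u (Or.inr ⟨h, huI.2⟩)).le
  have Gsq : ∀ u : ℝ, u ∈ Ioo z₁ z₃ → G u ^ 2 = H u := by
    intro u huI
    simp only [hG_def]
    rcases le_or_gt z₂ u with h | h
    · rw [if_pos h, Real.sq_sqrt (Hnonneg u huI)]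
    · rw [if_neg (not_le.2 h), neg_pow, Real.sq_sqrt (Hnonneg u huI)]
      simp
  have slopeG : Tendsto (fun x => G x / (x - z₂)) (𝓝[≠] z₂) (𝓝 (Real.sqrt k)) := by
    have h1 : Tendsto (fun x => Real.sqrt (H x / (x - z₂) ^ 2)) (𝓝[≠] z₂) (𝓝 (Real.sqrt k)) :=
      (Real.continuous_sqrt.continuousAt.tendsto).comp ratio2
    refine h1.congr' ?_
    have hIoo : Ioo z₁ z₃ ∈ 𝓝[≠] z₂ :=
      nhdsWithin_le_nhds (Ioo_mem_nhds hz₁₂ hz₂₃)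
    filter_upwards [self_mem_nhdsWithin, hIoo] with x hx hxI
    have hxne : x - z₂ ≠ 0 := sub_ne_zero.2 hx
    rw [Real.sqrt_div (Hnonneg x hxI), Real.sqrt_sq_eq_abs]
    simp only [hG_def]
    rcases le_or_gt z₂ x with h | h
    · rw [if_pos h, abs_of_pos (by cases lt_or_eq_of_le h with
        | inl h' => linarith
        | inr h' => exact absurd h'.symm hx)]
    · rw [if_neg (not_le.2 h), abs_of_neg (by linarith), div_neg, neg_div]
  set g' : ℝ → ℝ := fun u => if u = z₂ then Real.sqrt k else f u / (2 * G u) with hg'_def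
  have Gval_pos : ∀ u : ℝ, z₂ ≤ u → G u = Real.sqrt (H u) := by
    intro u h; simp only [hG_def]; rw [if_pos h]
  have Gval_neg : ∀ u : ℝ, u < z₂ → G u = -Real.sqrt (H u) := by
    intro u h; simp only [hG_def]; rw [if_neg (not_le.2 h)]
  have Gpos : ∀ u : ℝ, u ∈ Ioo z₂ z₃ → 0 < G u := by
    intro u huI
    rw [Gval_pos u huI.1.le]
    exact Real.sqrt_pos.2 (Hpos u (Or.inr huI))
  have Gneg : ∀ u : ℝ, u ∈ Ioo z₁ z₂ → G u < 0 := by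
    intro u huI
    rw [Gval_neg u huI.2]
    simp only [neg_neg, neg_lt, neg_zero]
    exact Real.sqrt_pos.2 (Hpos u (Or.inl huI))
  have Gne : ∀ u ∈ Ioo z₁ z₃, u ≠ z₂ → G u ≠ 0 := by
    intro u huI hne
    rcases lt_or_gt_of_ne hne with h | h
    · exact ne_of_lt (Gneg u ⟨huI.1, h⟩)
    · exact ne_of_gt (Gpos u ⟨h, huI.2⟩)
  have Gderiv : ∀ u ∈ Ioo z₁ z₃, HasDerivAt G (g' u) u := by
    intro u huI
    rcases lt_trichotomy u z₂ with h | h | h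
    · -- u < z₂ : G = -sqrt ∘ H near u
      have hHu : 0 < H u := Hpos u (Or.inl ⟨huI.1, h⟩)
      have hd : HasDerivAt (fun x => -Real.sqrt (H x))
          (-(1 / (2 * Real.sqrt (H u)) * f u)) u := by
        have hsq : HasDerivAt Real.sqrt (1 / (2 * Real.sqrt (H u))) (H u) :=
          Real.hasDerivAt_sqrt (ne_of_gt hHu)
        exact (hsq.comp u (Hderiv u (hz₁.trans huI.1))).neg
      have hev : (fun x => -Real.sqrt (H x)) =ᶠ[𝓝 u] G := by
        filter_upwards [Iio_mem_nhds h] with x hx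
        exact (Gval_neg x hx).symm
      have := hd.congr_of_eventuallyEq hev.symm
      refine this.congr_deriv ?_
      simp only [hg'_def]
      rw [if_neg (ne_of_lt h), Gval_neg u h]
      have hs : Real.sqrt (H u) ≠ 0 := ne_of_gt (Real.sqrt_pos.2 hHu)
      field_simp
    · -- u = z₂
      subst h
      rw [hasDerivAt_iff_tendsto_slope]
      have h1 : g' u = Real.sqrt k := by simp [hg'_def]
      rw [h1]
      refine slopeG.congr' ?_
      filter_upwards [self_mem_nhdsWithin] with x hx
      rw [slope_def_field, Gz₂, sub_zero]
    · -- z₂ < u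
      have hHu : 0 < H u := Hpos u (Or.inr ⟨h, huI.2⟩)
      have hd : HasDerivAt (fun x => Real.sqrt (H x))
          (1 / (2 * Real.sqrt (H u)) * f u) u := by
        have hsq : HasDerivAt Real.sqrt (1 / (2 * Real.sqrt (H u))) (H u) :=
          Real.hasDerivAt_sqrt (ne_of_gt hHu)
        exact hsq.comp u (Hderiv u (hz₁.trans huI.1))
      have hev : (fun x => Real.sqrt (H x)) =ᶠ[𝓝 u] G := by
        filter_upwards [Ioi_mem_nhds h] with x hx
        exact (Gval_pos x hx.le).symm
      have := hd.congr_of_eventuallyEq hev.symm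
      refine this.congr_deriv ?_
      simp only [hg'_def]
      rw [if_neg (ne_of_gt h), Gval_pos u h.le]
      have hs : Real.sqrt (H u) ≠ 0 := ne_of_gt (Real.sqrt_pos.2 hHu)
      field_simp
  have g'pos : ∀ u ∈ Ioo z₁ z₃, 0 < g' u := by
    intro u huI
    rcases lt_trichotomy u z₂ with h | h | h
    · simp only [hg'_def]
      rw [if_neg (ne_of_lt h)]
      apply div_pos_of_neg_of_neg (hf_neg u ⟨huI.1, h⟩)
      have := Gneg u ⟨huI.1, h⟩; linarith
    · subst h; simpa [hg'_def] using hsk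
    · simp only [hg'_def]
      rw [if_neg (ne_of_gt h)]
      apply div_pos (hf_pos u ⟨h, huI.2⟩)
      have := Gpos u ⟨h, huI.2⟩; linarith
  have g'cont : ∀ u ∈ Ioo z₁ z₃, ContinuousAt g' u := by
    intro u huI
    rcases ne_or_eq u z₂ with h | h
    · have hc : ContinuousAt (fun x => f x / (2 * G x)) u := by
        apply (hf_cont u (ne_of_gt (hz₁.trans huI.1))).div
        · exact continuousAt_const.mul (Gderiv u huI).continuousAt
        · simpa using Gne u huI h
      apply hc.congr
      filter_upwards [isOpen_ne.mem_nhds h] with x hx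
      simp only [hg'_def]
      rw [if_neg hx]
    · subst h
      have hpunct : Tendsto g' (𝓝[≠] u) (𝓝 (Real.sqrt k)) := by
        have hIoo : Ioo z₁ z₃ ∈ 𝓝[≠] u := nhdsWithin_le_nhds (Ioo_mem_nhds huI.1 huI.2)
        have h2 : Tendsto (fun x => f x / (x - u) / (2 * (G x / (x - u)))) (𝓝[≠] u)
            (𝓝 (hu * w u / (2 * Real.sqrt k))) := by
          apply ratio1.div (tendsto_const_nhds.mul slopeG)
          positivity
        have hval : hu * w u / (2 * Real.sqrt k) = Real.sqrt k := by
          have hss : Real.sqrt k * Real.sqrt k = k := Real.mul_self_sqrt hk.le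
          have h2k : hu * w u = 2 * k := by rw [hk_def]; ring
          field_simp
          linarith [hss, h2k]
        rw [hval] at h2
        refine h2.congr' ?_
        filter_upwards [self_mem_nhdsWithin, hIoo] with x hx hxI
        have hxu : x - u ≠ 0 := sub_ne_zero.2 hx
        have hGx : G x ≠ 0 := Gne x hxI hx
        simp only [hg'_def]
        rw [if_neg (show x ≠ u from hx)]
        rw [show 2 * (G x / (x - u)) = 2 * G x / (x - u) by ring]
        rw [div_div_div_cancel_right₀ hxu]
      have : Tendsto g' (𝓝 u) (𝓝 (Real.sqrt k)) := by
        rw [← nhdsNE_sup_pure u]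
        apply Tendsto.sup hpunct
        have : g' u = Real.sqrt k := by simp [hg'_def]
        rw [tendsto_pure_left]
        intro s hs
        rw [← this] at hs
        exact mem_of_mem_nhds hs
      have hval : g' u = Real.sqrt k := by simp [hg'_def]
      rw [ContinuousAt, hval]
      exact this
  have Gmono : StrictMonoOn G (Ioo z₁ z₃) := by
    apply strictMonoOn_of_deriv_pos (convex_Ioo z₁ z₃)
    · intro x hx
      exact (Gderiv x hx).continuousAt.continuousWithinAt
    · intro x hx
      rw [interior_Ioo] at hx
      rw [(Gderiv x hx).deriv]
      exact g'pos x hx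
  -- the compact window [c,d]
  set η : ℝ := min (z₂ - z₁) (z₃ - z₂) / 2 with hη_def
  have hηpos : 0 < η := by
    simp only [hη_def]
    have h1 : 0 < z₂ - z₁ := by linarith
    have h2 : 0 < z₃ - z₂ := by linarith
    positivity
  set c : ℝ := z₂ - η with hc_def
  set d : ℝ := z₂ + η with hd_def
  have hz₁c : z₁ < c := by
    simp only [hc_def, hη_def]
    have := min_le_left (z₂ - z₁) (z₃ - z₂); linarith
  have hdz₃ : d < z₃ := by
    simp only [hd_def, hη_def]
    have := min_le_right (z₂ - z₁) (z₃ - z₂); linarith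
  have hcz₂ : c < z₂ := by simp only [hc_def]; linarith
  have hz₂d : z₂ < d := by simp only [hd_def]; linarith
  have hcpos : 0 < c := hz₁.trans hz₁c
  have hIccsub : Icc c d ⊆ Ioo z₁ z₃ := fun x hx => ⟨hz₁c.trans_le hx.1, lt_of_le_of_lt hx.2 hdz₃⟩
  have GmonoIcc : StrictMonoOn G (Icc c d) := Gmono.mono hIccsub
  -- Ψ and its bound
  set proj : ℝ → ℝ := fun x => max c (min x d) with hproj_def
  have hproj_mem : ∀ x : ℝ, proj x ∈ Icc c d := by
    intro x
    exact ⟨le_max_left _ _, max_le (le_of_lt (hcz₂.trans hz₂d)) (min_le_right _ _)⟩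
  have hproj_id : ∀ x ∈ Icc c d, proj x = x := by
    intro x hx
    simp only [hproj_def]
    rw [min_eq_left hx.2, max_eq_right hx.1]
  set Ψ : ℝ → ℝ := fun x => w (proj x) / g' (proj x) with hΨ_def
  have hproj_cont : Continuous proj := by
    simp only [hproj_def]
    fun_prop
  have hΨ_cont : Continuous Ψ := by
    rw [continuous_iff_continuousAt]
    intro x
    have hpx : proj x ∈ Icc c d := hproj_mem x
    have hpI : proj x ∈ Ioo z₁ z₃ := hIccsub hpx
    have h1 : ContinuousAt w (proj x) := hw_cont _ (ne_of_gt (hz₁.trans hpI.1))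
    have h2 : ContinuousAt g' (proj x) := g'cont _ hpI
    have h3 : g' (proj x) ≠ 0 := ne_of_gt (g'pos _ hpI)
    exact (h1.div h2 h3).comp hproj_cont.continuousAt
  obtain ⟨C, hC⟩ : ∃ C : ℝ, ∀ x : ℝ, |Ψ x| ≤ C := by
    obtain ⟨x₀, hx₀mem, hx₀⟩ := isCompact_Icc.exists_isMaxOn
      (nonempty_Icc.2 (le_of_lt (hcz₂.trans hz₂d)))
      ((continuous_abs.comp hΨ_cont).continuousOn (s := Icc c d))
    rw [isMaxOn_iff] at hx₀
    refine ⟨|Ψ x₀|, fun x => ?_⟩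
    have hid : Ψ (proj x) = Ψ x := by
      simp only [hΨ_def]
      rw [hproj_id (proj x) (hproj_mem x)]
    calc |Ψ x| = |Ψ (proj x)| := by rw [hid]
      _ ≤ |Ψ x₀| := hx₀ (proj x) (hproj_mem x)
  have hΨz₂ : Ψ z₂ = w z₂ / Real.sqrt k := by
    simp only [hΨ_def]
    rw [hproj_id z₂ ⟨hcz₂.le, hz₂d.le⟩]
    simp [hg'_def]
  -- key identity, eventually in m
  set Gi : ℝ → ℝ := ginv G c d with hGi_def
  have Gi_meas : Measurable Gi := by
    rw [hGi_def]; exact (ginv_mono hcpos.le).measurable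
  have Gi_mem : ∀ v : ℝ, Gi v ∈ Icc c d := fun v =>
    ginv_mem hcpos.le (le_of_lt (hcz₂.trans hz₂d)) v
  have GiG : ∀ u ∈ Icc c d, Gi (G u) = u := fun u h => ginv_leftInv GmonoIcc h
  have Gi_tendsto : Tendsto Gi (𝓝 0) (𝓝 z₂) := by
    have h1 := ginv_tendsto hcpos.le GmonoIcc (z := z₂) ⟨hcz₂, hz₂d⟩
    rw [Gz₂] at h1
    exact h1
  have Gtend0 : Tendsto (fun m => G m) (𝓝[<] z₂) (𝓝 0) := by
    have h1 : ContinuousAt G z₂ := (Gderiv z₂ ⟨hz₁₂, hz₂₃⟩).continuousAt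
    have h2 := h1.tendsto.mono_left (nhdsWithin_le_nhds (s := Iio z₂))
    rwa [Gz₂] at h2
  have evkey : ∀ᶠ m in 𝓝[<] z₂,
      (∫ u in m..M m, w u / Real.sqrt (H m - H u)) = ∫ s in Ioo (-1:ℝ) 1, Ψ (Gi (-G m * s)) / Real.sqrt (1 - s ^ 2) := by
    have hev1 : Ioo (max mbar c) z₂ ∈ 𝓝[<] z₂ :=
      Ioo_mem_nhdsLT_of_mem ⟨max_lt hmbar.2 hcz₂, le_refl z₂⟩
    have hev2 : ∀ᶠ m in 𝓝[<] z₂, M m < d := hMlim (Iio_mem_nhds hz₂d)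
    filter_upwards [hev1, hev2] with m hm hMd
    obtain ⟨hmbarm, hmz₂⟩ := hm
    have hmgt : mbar < m := lt_of_le_of_lt (le_max_left _ _) hmbarm
    have hcm : c < m := lt_of_le_of_lt (le_max_right _ _) hmbarm
    obtain ⟨hMI, hHM⟩ := hM m ⟨hmgt, hmz₂⟩
    set b := M m with hb_def
    have hmIcc : m ∈ Icc c d := ⟨hcm.le, le_of_lt (hmz₂.trans hz₂d)⟩
    have hbIcc : b ∈ Icc c d := ⟨le_of_lt (hcz₂.trans hMI.1), hMd.le⟩
    have hmb : m < b := hmz₂.trans hMI.1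
    have hmI13 : m ∈ Ioo z₁ z₃ := hIccsub hmIcc
    have hbI13 : b ∈ Ioo z₁ z₃ := hIccsub hbIcc
    have hGm_neg : G m < 0 := by
      rw [← Gz₂]; exact Gmono hmI13 ⟨hz₁₂, hz₂₃⟩ hmz₂
    have hGmne : 0 < -G m := by linarith
    have hGb_pos : 0 < G b := by
      rw [← Gz₂]; exact Gmono ⟨hz₁₂, hz₂₃⟩ hbI13 hMI.1
    have hGm2 : G m ^ 2 = H m := Gsq m hmI13
    have hGb : G b = -G m := by
      have h2 : G b ^ 2 = G m ^ 2 := by rw [Gsq b hbI13, Gsq m hmI13, hHM]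
      have h3 : (G b + G m) * (G b - G m) = 0 := by
        have : (G b + G m) * (G b - G m) = G b ^ 2 - G m ^ 2 := by ring
        rw [this, h2, sub_self]
      rcases mul_eq_zero.1 h3 with h4 | h4
      · linarith
      · linarith
    have hIoosub : Ioo m b ⊆ Icc c d := fun x hx =>
      ⟨le_trans hmIcc.1 hx.1.le, le_trans hx.2.le hbIcc.2⟩
    -- step 1 : interval integral to set integral over Ioo
    have step1 : (∫ u in m..b, w u / Real.sqrt (H m - H u))
        = ∫ u in Ioo m b, w u / Real.sqrt (H m - H u) := by
      rw [intervalIntegral.integral_of_le hmb.le, integral_Ioc_eq_integral_Ioo]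
    -- step 2 : change of variables via G
    have step2 : (∫ v in G '' Ioo m b, Ψ (Gi v) / Real.sqrt (G m ^ 2 - v ^ 2))
        = ∫ u in Ioo m b, |g' u| • (Ψ (Gi (G u)) / Real.sqrt (G m ^ 2 - G u ^ 2)) :=
      integral_image_eq_integral_abs_deriv_smul measurableSet_Ioo
        (fun x hx => (Gderiv x (hIccsub (hIoosub hx))).hasDerivWithinAt)
        (GmonoIcc.injOn.mono hIoosub) _
    have step2' : ∀ u ∈ Ioo m b,
        |g' u| • (Ψ (Gi (G u)) / Real.sqrt (G m ^ 2 - G u ^ 2))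
          = w u / Real.sqrt (H m - H u) := by
      intro u huIoo
      have huIcc := hIoosub huIoo
      have huI13 := hIccsub huIcc
      have hg'u : 0 < g' u := g'pos u huI13
      rw [abs_of_pos hg'u, GiG u huIcc, hGm2, Gsq u huI13]
      have hΨu : Ψ u = w u / g' u := by
        simp only [hΨ_def]; rw [hproj_id u huIcc]
      rw [hΨu, smul_eq_mul]
      rw [div_div, ← mul_div_assoc, mul_div_mul_left _ _ (ne_of_gt hg'u)]
    -- step 3 : image of the interval
    have himg : G '' Ioo m b = Ioo (G m) (-G m) := by
      rw [← hGb]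
      apply Subset.antisymm
      · rintro v ⟨x, hx, rfl⟩
        exact ⟨GmonoIcc hmIcc (hIoosub hx) hx.1, GmonoIcc (hIoosub hx) hbIcc hx.2⟩
      · have hcont : ContinuousOn G (Icc m b) := fun x hx =>
          ((Gderiv x (hIccsub ⟨le_trans hmIcc.1 hx.1, le_trans hx.2 hbIcc.2⟩)).continuousAt).continuousWithinAt
        exact intermediate_value_Ioo hmb.le hcont
    -- step 4 : linear change of variables
    have himg2 : (fun s => -G m * s) '' Ioo (-1:ℝ) 1 = Ioo (G m) (-G m) := by
      rw [image_mul_left_Ioo hGmne]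
      congr 1 <;> ring
    have step4 : (∫ v in Ioo (G m) (-G m), Ψ (Gi v) / Real.sqrt (G m ^ 2 - v ^ 2))
        = ∫ s in Ioo (-1:ℝ) 1,
            |(-G m)| • (Ψ (Gi (-G m * s)) / Real.sqrt (G m ^ 2 - (-G m * s) ^ 2)) := by
      rw [← himg2]
      refine integral_image_eq_integral_abs_deriv_smul (f' := fun _ => -G m)
        measurableSet_Ioo (fun x _ => ?_)
        (fun x _ y _ hxy => mul_left_cancel₀ (ne_of_gt hGmne) hxy) _
      have hd : HasDerivAt (fun y : ℝ => -G m * y) (-G m) x := by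
        simpa using (hasDerivAt_id x).const_mul (-G m)
      exact hd.hasDerivWithinAt
    have step4' : ∀ s ∈ Ioo (-1:ℝ) 1,
        |(-G m)| • (Ψ (Gi (-G m * s)) / Real.sqrt (G m ^ 2 - (-G m * s) ^ 2)) = Ψ (Gi (-G m * s)) / Real.sqrt (1 - s ^ 2) := by
      intro s hs
      have hs2 : 0 < 1 - s ^ 2 := by
        have h2 : s ^ 2 < 1 := (sq_lt_one_iff_abs_lt_one (a := s)).2 (abs_lt.2 ⟨hs.1, hs.2⟩)
        linarith
      have hsq : 0 < Real.sqrt (1 - s ^ 2) := Real.sqrt_pos.2 hs2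
      have hGm2' : G m ^ 2 - (-G m * s) ^ 2 = (-G m) ^ 2 * (1 - s ^ 2) := by ring
      rw [abs_of_pos hGmne, smul_eq_mul, hGm2', Real.sqrt_mul (sq_nonneg _),
        Real.sqrt_sq_eq_abs, abs_of_pos hGmne, ← mul_div_assoc,
        mul_div_mul_left _ _ (ne_of_gt hGmne)]
    calc (∫ u in m..b, w u / Real.sqrt (H m - H u))
        = ∫ u in Ioo m b, w u / Real.sqrt (H m - H u) := step1
      _ = ∫ u in Ioo m b, |g' u| • (Ψ (Gi (G u)) / Real.sqrt (G m ^ 2 - G u ^ 2)) :=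
          (setIntegral_congr_fun measurableSet_Ioo step2').symm
      _ = ∫ v in G '' Ioo m b, Ψ (Gi v) / Real.sqrt (G m ^ 2 - v ^ 2) := step2.symm
      _ = ∫ v in Ioo (G m) (-G m), Ψ (Gi v) / Real.sqrt (G m ^ 2 - v ^ 2) := by rw [himg]
      _ = ∫ s in Ioo (-1:ℝ) 1,
            |(-G m)| • (Ψ (Gi (-G m * s)) / Real.sqrt (G m ^ 2 - (-G m * s) ^ 2)) := step4
      _ = ∫ s in Ioo (-1:ℝ) 1, Ψ (Gi (-G m * s)) / Real.sqrt (1 - s ^ 2) := setIntegral_congr_fun measurableSet_Ioo step4'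
  -- the limit via dominated convergence
  have keylim : Tendsto (fun m => ∫ s in Ioo (-1:ℝ) 1, Ψ (Gi (-G m * s)) / Real.sqrt (1 - s ^ 2)) (𝓝[<] z₂)
      (𝓝 (Ψ z₂ * Real.pi)) := by
    have hC0 : 0 ≤ C := le_trans (abs_nonneg _) (hC 0)
    have h1 : ∀ᶠ m in 𝓝[<] z₂,
        AEStronglyMeasurable (fun s => Ψ (Gi (-G m * s)) / Real.sqrt (1 - s ^ 2))
          (volume.restrict (Ioo (-1:ℝ) 1)) := by
      filter_upwards with m
      apply Measurable.aestronglyMeasurable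
      apply Measurable.div
      · exact hΨ_cont.measurable.comp (Gi_meas.comp (measurable_id.const_mul (-G m)))
      · exact Real.continuous_sqrt.measurable.comp
          ((measurable_const.sub (measurable_id.pow_const 2)))
    have h2 : ∀ᶠ m in 𝓝[<] z₂, ∀ᵐ s ∂(volume.restrict (Ioo (-1:ℝ) 1)),
        ‖Ψ (Gi (-G m * s)) / Real.sqrt (1 - s ^ 2)‖ ≤ C / Real.sqrt (1 - s ^ 2) := by
      filter_upwards with m
      filter_upwards [ae_restrict_mem measurableSet_Ioo] with s hs
      have hs2 : 0 < 1 - s ^ 2 := by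
        have h2 : s ^ 2 < 1 := (sq_lt_one_iff_abs_lt_one (a := s)).2 (abs_lt.2 ⟨hs.1, hs.2⟩)
        linarith
      have hsq : 0 < Real.sqrt (1 - s ^ 2) := Real.sqrt_pos.2 hs2
      have heq : ‖Ψ (Gi (-G m * s)) / Real.sqrt (1 - s ^ 2)‖ = |Ψ (Gi (-G m * s))| / Real.sqrt (1 - s ^ 2) := by
        rw [Real.norm_eq_abs, abs_div, abs_of_pos hsq]
      rw [heq]
      gcongr
      exact hC _
    have h3 : Integrable (fun s => C / Real.sqrt (1 - s ^ 2))
        (volume.restrict (Ioo (-1:ℝ) 1)) := aux_pi_integrable C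
    have h4 : ∀ᵐ s ∂(volume.restrict (Ioo (-1:ℝ) 1)),
        Tendsto (fun m => Ψ (Gi (-G m * s)) / Real.sqrt (1 - s ^ 2)) (𝓝[<] z₂) (𝓝 (Ψ z₂ / Real.sqrt (1 - s ^ 2))) := by
      filter_upwards [ae_restrict_mem measurableSet_Ioo] with s hs
      have harg : Tendsto (fun m => -G m * s) (𝓝[<] z₂) (𝓝 0) := by
        have h5 := (Gtend0.neg).mul_const s
        simpa using h5
      have hGi : Tendsto (fun m => Gi (-G m * s)) (𝓝[<] z₂) (𝓝 z₂) :=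
        Gi_tendsto.comp harg
      have hΨt : Tendsto (fun m => Ψ (Gi (-G m * s))) (𝓝[<] z₂) (𝓝 (Ψ z₂)) :=
        (hΨ_cont.continuousAt.tendsto).comp hGi
      exact hΨt.div_const _
    have h6 := tendsto_integral_filter_of_dominated_convergence
      (bound := fun s => C / Real.sqrt (1 - s ^ 2))
      (f := fun s => Ψ z₂ / Real.sqrt (1 - s ^ 2)) h1 h2 h3 h4
    rwa [aux_pi_integral (Ψ z₂)] at h6
  -- conclusion
  have final : Tendsto (fun m => ∫ u in m..M m, w u / Real.sqrt (H m - H u)) (𝓝[<] z₂)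
      (𝓝 (Ψ z₂ * Real.pi)) := keylim.congr' (by filter_upwards [evkey] with m hm using hm.symm)
  have hval : Ψ z₂ * Real.pi = Real.pi * Real.sqrt (2 * (δ + γ * τ / z₂ ^ 2) / hu) := by
    have hw2 : w z₂ = δ + γ * τ / z₂ ^ 2 := rfl
    have h1 : 2 * (δ + γ * τ / z₂ ^ 2) / hu = w z₂ ^ 2 / k := by
      rw [← hw2, hk_def]
      have h2 : w z₂ ≠ 0 := ne_of_gt hwz₂pos
      have h3 : hu ≠ 0 := ne_of_gt hupos
      field_simp
    rw [hΨz₂, mul_comm]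
    congr 1
    rw [h1, Real.sqrt_div (sq_nonneg _), Real.sqrt_sq hwz₂pos.le]
  rw [hval] at final
  exact final
end

section
/- Let τ > 0 and suppose there exist 0 < z₁ < z₂ < z₃ such that h(u, τ) > 0 for u ∈ (0, z₁) ∪ (z₂, z₃) and h(u, τ) < 0 for u ∈ (z₁, z₂) ∪ (z₃, ∞). Define H(u) := ∫_{z₂}^{u} h(s, τ)·(δ + γτ/s²) ds, and assume H(z₁) ≤ H(z₃) and ∂h/∂u(z₁, τ) < 0. Suppose M : (z₁, z₂) → (z₂, z₃) satisfies H(M(m)) = H(m) for all m ∈ (z₁, z₂). Then ∫_{m}^{M(m)} (δ + γτ/u²)/√(H(m) − H(u)) du → ∞ as m → z₁⁺. -/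
open Set Filter Topology intervalIntegral MeasureTheory

lemma inv_sqrt_eq_rpow (x : ℝ) : (Real.sqrt x)⁻¹ = x ^ (-(1/2) : ℝ) := by
  rcases lt_trichotomy x 0 with h | h | h
  · rw [Real.sqrt_eq_zero_of_nonpos h.le, Real.rpow_def_of_neg h]
    rw [show (-(1/2) : ℝ) * Real.pi = -(Real.pi/2) by ring, Real.cos_neg,
      Real.cos_pi_div_two, mul_zero, inv_zero]
  · subst h; rw [Real.sqrt_zero, Real.zero_rpow (by norm_num)]; simp
  · rw [Real.sqrt_eq_rpow, ← Real.rpow_neg h.le]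

lemma div_sqrt_eq (C x : ℝ) : C / Real.sqrt x = C * x ^ (-(1/2) : ℝ) := by
  rw [div_eq_mul_inv, inv_sqrt_eq_rpow]

lemma sqrt_sing_integrable {a b C : ℝ} :
    IntervalIntegrable (fun u => C / Real.sqrt (u - a)) volume a b := by
  have h1 : IntervalIntegrable (fun x : ℝ => x ^ (-(1/2) : ℝ)) volume (a - a) (b - a) :=
    intervalIntegral.intervalIntegrable_rpow' (by norm_num)
  have h2 := (h1.comp_sub_right a).const_mul C
  simp only [sub_add_cancel] at h2
  simpa only [← div_sqrt_eq] using h2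

lemma sqrt_sing_integrable' {a b C : ℝ} :
    IntervalIntegrable (fun u => C / Real.sqrt (b - u)) volume a b := by
  have h1 : IntervalIntegrable (fun x : ℝ => x ^ (-(1/2) : ℝ)) volume (b - b) (b - a) :=
    intervalIntegral.intervalIntegrable_rpow' (by norm_num)
  have h2 := (h1.comp_sub_left b).const_mul C
  simp only [sub_sub_cancel] at h2
  refine (IntervalIntegrable.symm ?_)
  simpa only [← div_sqrt_eq] using h2

lemma aux_left {a b C : ℝ} (hab : a < b) {f : ℝ → ℝ}
    (hf : ContinuousOn f (Ioo a b))
    (hbd : ∀ u ∈ Ioo a b, |f u| ≤ C / Real.sqrt (u - a)) :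
    IntervalIntegrable f volume a b := by
  rw [intervalIntegrable_iff_integrableOn_Ioc_of_le hab.le]
  refine IntegrableOn.congr_set_ae ?_ Ioo_ae_eq_Ioc.symm
  have hg : IntegrableOn (fun u => C / Real.sqrt (u - a)) (Ioo a b) volume := by
    have := sqrt_sing_integrable (a := a) (b := b) (C := C)
    rw [intervalIntegrable_iff_integrableOn_Ioc_of_le hab.le] at this
    exact this.mono_set Ioo_subset_Ioc_self
  refine Integrable.mono' hg (hf.aestronglyMeasurable measurableSet_Ioo) ?_
  filter_upwards [ae_restrict_mem measurableSet_Ioo] with u hu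
  simpa [Real.norm_eq_abs] using hbd u hu

lemma aux_right {a b C : ℝ} (hab : a < b) {f : ℝ → ℝ}
    (hf : ContinuousOn f (Ioo a b))
    (hbd : ∀ u ∈ Ioo a b, |f u| ≤ C / Real.sqrt (b - u)) :
    IntervalIntegrable f volume a b := by
  rw [intervalIntegrable_iff_integrableOn_Ioc_of_le hab.le]
  refine IntegrableOn.congr_set_ae ?_ Ioo_ae_eq_Ioc.symm
  have hg : IntegrableOn (fun u => C / Real.sqrt (b - u)) (Ioo a b) volume := by
    have := sqrt_sing_integrable' (a := a) (b := b) (C := C)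
    rw [intervalIntegrable_iff_integrableOn_Ioc_of_le hab.le] at this
    exact this.mono_set Ioo_subset_Ioc_self
  refine Integrable.mono' hg (hf.aestronglyMeasurable measurableSet_Ioo) ?_
  filter_upwards [ae_restrict_mem measurableSet_Ioo] with u hu
  simpa [Real.norm_eq_abs] using hbd u hu


/-- Blow-up of the time map as the shooting level approaches the smallest zero
`z₁` of `h(·,τ)` (proof of Proposition 6.2, case `H(z₁) ≤ H(z₃)`). -/
theorem stmt_12 (a₁ a₂ b₁ b₂ c₁ c₂ γ δ : ℝ)
    (ha₁ : 0 < a₁) (ha₂ : 0 < a₂) (hb₁ : 0 < b₁) (hb₂ : 0 < b₂)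
    (hc₁ : 0 < c₁) (hc₂ : 0 < c₂) (hγ : 0 < γ) (hδ : 0 < δ)
    (τ : ℝ) (hτ : 0 < τ)
    (z₁ z₂ z₃ : ℝ) (hz₁ : 0 < z₁) (hz₁₂ : z₁ < z₂) (hz₂₃ : z₂ < z₃)
    (hpos : ∀ u : ℝ, u ∈ Ioo 0 z₁ ∪ Ioo z₂ z₃ →
      0 < hfun a₁ a₂ b₁ b₂ c₁ c₂ γ u τ)
    (hneg : ∀ u : ℝ, u ∈ Ioo z₁ z₂ ∪ Ioi z₃ →
      hfun a₁ a₂ b₁ b₂ c₁ c₂ γ u τ < 0)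
    (H : ℝ → ℝ)
    (hH : ∀ u : ℝ, H u = ∫ s in z₂..u,
      hfun a₁ a₂ b₁ b₂ c₁ c₂ γ s τ * (δ + γ * τ / s ^ 2))
    (hH13 : H z₁ ≤ H z₃)
    (hu1 : ℝ) (hder : HasDerivAt (fun u => hfun a₁ a₂ b₁ b₂ c₁ c₂ γ u τ) hu1 z₁)
    (hu1neg : hu1 < 0)
    (M : ℝ → ℝ)
    (hM : ∀ m ∈ Ioo z₁ z₂, M m ∈ Ioo z₂ z₃ ∧ H (M m) = H m) :
    Tendsto (fun m => ∫ u in m..M m,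
        (δ + γ * τ / u ^ 2) / Real.sqrt (H m - H u))
      (𝓝[>] z₁) atTop := by
  set hh : ℝ → ℝ := fun s => hfun a₁ a₂ b₁ b₂ c₁ c₂ γ s τ with hhdef
  set w : ℝ → ℝ := fun s => δ + γ * τ / s ^ 2 with hwdef
  set F : ℝ → ℝ := fun s => hh s * w s with hFdef
  -- continuity
  have hhcont : ContinuousOn hh {s : ℝ | 0 < s} := by
    intro s hs
    have hs' : (s:ℝ) ≠ 0 := ne_of_gt hs
    apply ContinuousAt.continuousWithinAt
    simp only [hhdef, hfun]
    fun_prop (disch := assumption)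
  have hwcont : ContinuousOn w {s : ℝ | 0 < s} := by
    intro s hs
    have hs' : (s:ℝ) ^ 2 ≠ 0 := pow_ne_zero 2 (ne_of_gt hs)
    apply ContinuousAt.continuousWithinAt
    simp only [hwdef]
    fun_prop (disch := assumption)
  have hFcont : ContinuousOn F {s : ℝ | 0 < s} := hhcont.mul hwcont
  have hwpos : ∀ s : ℝ, 0 < s → 0 < w s := by
    intro s hs
    have : 0 < γ * τ / s ^ 2 := by positivity
    simp only [hwdef]; linarith
  set B : ℝ := δ + γ * τ / z₁ ^ 2 with hBdef
  have hBpos : 0 < B := hwpos z₁ hz₁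
  have hwleB : ∀ s : ℝ, z₁ ≤ s → w s ≤ B := by
    intro s hs
    have hs0 : (0:ℝ) < s := lt_of_lt_of_le hz₁ hs
    have : γ * τ / s ^ 2 ≤ γ * τ / z₁ ^ 2 := by
      apply div_le_div_of_nonneg_left (by positivity) (by positivity)
      exact pow_le_pow_left₀ hz₁.le hs 2
    simp only [hwdef, hBdef]; linarith
  -- interval integrability of F on positive intervals
  have hFi : ∀ a b : ℝ, 0 < a → 0 < b → IntervalIntegrable F volume a b := by
    intro a b ha hb
    apply ContinuousOn.intervalIntegrable
    apply hFcont.mono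
    intro x hx
    rcases le_total a b with h | h
    · rw [uIcc_of_le h] at hx; exact lt_of_lt_of_le ha hx.1
    · rw [uIcc_of_ge h] at hx; exact lt_of_lt_of_le hb hx.1
  -- derivative of H
  have hHeq : (fun x : ℝ => ∫ s in z₂..x, F s) = H := by
    funext x; rw [hH x]
  have hHder : ∀ u : ℝ, 0 < u → HasDerivAt H (F u) u := by
    intro u hu
    have hInt : IntervalIntegrable F volume z₂ u := hFi _ _ (lt_trans hz₁ hz₁₂) hu
    have hopen : IsOpen {s : ℝ | 0 < s} := isOpen_lt continuous_const continuous_id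
    have hmeas : StronglyMeasurableAtFilter F (𝓝 u) volume :=
      hFcont.stronglyMeasurableAtFilter hopen u hu
    have hcontAt : ContinuousAt F u := hFcont.continuousAt (hopen.mem_nhds hu)
    have := intervalIntegral.integral_hasDerivAt_right hInt hmeas hcontAt
    rwa [hHeq] at this
  -- H difference as integral
  have hHdiff : ∀ a b : ℝ, 0 < a → 0 < b → H b - H a = ∫ s in a..b, F s := by
    intro a b ha hb
    rw [hH a, hH b, ← intervalIntegral.integral_add_adjacent_intervals
      (hFi z₂ a (lt_trans hz₁ hz₁₂) ha) (hFi a b ha hb)]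
    ring
  have hHdiff' : ∀ p q : ℝ, 0 < p → 0 < q → H p - H q = ∫ s in p..q, -F s := by
    intro p q hp hq
    rw [hHdiff q p hq hp, intervalIntegral.integral_neg]
    exact intervalIntegral.integral_symm p q
  have HcontOn : ContinuousOn H {s : ℝ | 0 < s} := fun u hu =>
    (hHder u hu).continuousAt.continuousWithinAt
  -- h z₁ = 0
  have hz10 : hh z₁ = 0 := by
    have hc : ContinuousAt hh z₁ := hder.continuousAt
    have h1 : 0 ≤ hh z₁ := by
      refine ge_of_tendsto (hc.continuousWithinAt : Tendsto hh (𝓝[<] z₁) (𝓝 (hh z₁))) ?_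
      filter_upwards [Ioo_mem_nhdsLT_of_mem (⟨hz₁, le_refl z₁⟩ : z₁ ∈ Ioc 0 z₁)] with s hs
      exact (hpos s (Or.inl hs)).le
    have h2 : hh z₁ ≤ 0 := by
      refine le_of_tendsto (hc.continuousWithinAt : Tendsto hh (𝓝[>] z₁) (𝓝 (hh z₁))) ?_
      filter_upwards [Ioo_mem_nhdsGT_of_mem (⟨le_refl z₁, hz₁₂⟩ : z₁ ∈ Ico z₁ z₂)] with s hs
      exact (hneg s (Or.inl hs)).le
    linarith
  -- sign of F
  have hFneg : ∀ u ∈ Ioo z₁ z₂, F u < 0 := by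
    intro u hu
    have hu0 : (0:ℝ) < u := lt_trans hz₁ hu.1
    exact mul_neg_of_neg_of_pos (hneg u (Or.inl hu)) (hwpos u hu0)
  have hFpos : ∀ u ∈ Ioo z₂ z₃, 0 < F u := by
    intro u hu
    have hu0 : (0:ℝ) < u := lt_trans (lt_trans hz₁ hz₁₂) hu.1
    exact mul_pos (hpos u (Or.inr hu)) (hwpos u hu0)
  -- strict monotonicity of H
  have hanti : StrictAntiOn H (Icc z₁ z₂) := by
    apply strictAntiOn_of_deriv_neg (convex_Icc _ _)
    · intro x hx
      exact (hHder x (lt_of_lt_of_le hz₁ hx.1)).continuousAt.continuousWithinAt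
    · intro x hx
      rw [interior_Icc] at hx
      rw [(hHder x (lt_trans hz₁ hx.1)).deriv]
      exact hFneg x hx
  have hmono : StrictMonoOn H (Icc z₂ z₃) := by
    apply strictMonoOn_of_deriv_pos (convex_Icc _ _)
    · intro x hx
      exact (hHder x (lt_of_lt_of_le (lt_trans hz₁ hz₁₂) hx.1)).continuousAt.continuousWithinAt
    · intro x hx
      rw [interior_Icc] at hx
      rw [(hHder x (lt_trans (lt_trans hz₁ hz₁₂) hx.1)).deriv]
      exact hFpos x hx
  -- slope bound near z₁
  obtain ⟨m₁, hm₁gt, hm₁lt, hslope⟩ :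
      ∃ m₁ : ℝ, z₁ < m₁ ∧ m₁ < z₂ ∧ ∀ s ∈ Ioc z₁ m₁, -hh s ≤ (1 - hu1) * (s - z₁) := by
    have hslope' : Tendsto (slope hh z₁) (𝓝[≠] z₁) (𝓝 hu1) :=
      hasDerivAt_iff_tendsto_slope.mp hder
    have hev : ∀ᶠ s in 𝓝[≠] z₁, hu1 - 1 < slope hh z₁ s :=
      hslope' (isOpen_Ioi.mem_nhds (by linarith : hu1 - 1 < hu1))
    rw [eventually_nhdsWithin_iff, Metric.eventually_nhds_iff] at hev
    obtain ⟨ε, hε, hev⟩ := hev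
    refine ⟨min (z₁ + ε / 2) ((z₁ + z₂) / 2), by
      simp only [lt_min_iff]; constructor <;> linarith, by
      refine lt_of_le_of_lt (min_le_right _ _) (by linarith), ?_⟩
    intro s hs
    have hs1 : z₁ < s := hs.1
    have hs2 : s - z₁ < ε := by
      have := hs.2.trans (min_le_left _ _)
      linarith
    have hd : dist s z₁ < ε := by
      rw [Real.dist_eq, abs_of_pos (by linarith : (0:ℝ) < s - z₁)]; exact hs2
    have hdiv := hev hd (ne_of_gt hs1)
    rw [slope_def_field, hz10, sub_zero] at hdiv
    rw [lt_div_iff₀ (by linarith : (0:ℝ) < s - z₁)] at hdiv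
    nlinarith [hdiv]
  set L : ℝ := 1 - hu1 with hLdef
  have hLpos : 0 < L := by simp only [hLdef]; linarith
  set K : ℝ := L * B with hKdef
  have hKpos : 0 < K := mul_pos hLpos hBpos
  -- key upper bound on H m - H u
  have hkey : ∀ m u : ℝ, z₁ < m → m ≤ u → u ≤ m₁ → H m - H u ≤ K * (u - z₁) ^ 2 := by
    intro m u hm hmu hum
    have hm0 : (0:ℝ) < m := lt_trans hz₁ hm
    have hu0 : (0:ℝ) < u := lt_of_lt_of_le hm0 hmu
    rw [hHdiff' m u hm0 hu0]
    have hb : ∀ s ∈ Icc m u, -F s ≤ K * (u - z₁) := by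
      intro s hs
      have hsz : s ∈ Ioc z₁ m₁ := ⟨lt_of_lt_of_le hm hs.1, le_trans hs.2 hum⟩
      have hs0 : (0:ℝ) < s := lt_trans hz₁ hsz.1
      have hhneg : hh s < 0 := hneg s (Or.inl ⟨hsz.1, lt_of_le_of_lt hsz.2 hm₁lt⟩)
      have h2 : -hh s ≤ L * (s - z₁) := hslope s hsz
      have h3 : L * (s - z₁) ≤ L * (u - z₁) := by
        apply mul_le_mul_of_nonneg_left _ hLpos.le
        linarith [hs.2]
      have h4 : -F s = (-hh s) * w s := by simp only [hFdef]; ring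
      rw [h4]
      calc (-hh s) * w s ≤ (L * (u - z₁)) * B :=
            mul_le_mul (le_trans h2 h3) (hwleB s hsz.1.le) (hwpos s hs0).le
              (by nlinarith [hsz.1, hum])
        _ = K * (u - z₁) := by rw [hKdef]; ring
    calc (∫ s in m..u, -F s) ≤ ∫ s in m..u, K * (u - z₁) := by
          apply intervalIntegral.integral_mono_on hmu ((hFi m u hm0 hu0).neg)
            intervalIntegrable_const hb
      _ = (u - m) * (K * (u - z₁)) := by
          rw [intervalIntegral.integral_const, smul_eq_mul]
      _ ≤ K * (u - z₁) ^ 2 := by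
          have h5 : u - m ≤ u - z₁ := by linarith
          have h6 : (0:ℝ) ≤ u - z₁ := by linarith
          have h7 : (0:ℝ) ≤ K * (u - z₁) := mul_nonneg hKpos.le h6
          calc (u - m) * (K * (u - z₁)) ≤ (u - z₁) * (K * (u - z₁)) :=
                mul_le_mul_of_nonneg_right h5 h7
            _ = K * (u - z₁) ^ 2 := by ring
  -- main per-m estimate
  have main : ∀ m ∈ Ioo z₁ m₁,
      (δ / Real.sqrt K) * (Real.log (m₁ - z₁) - Real.log (m - z₁)) ≤
        ∫ u in m..M m, (δ + γ * τ / u ^ 2) / Real.sqrt (H m - H u) := by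
    intro m hm
    obtain ⟨hmz₁, hmm₁⟩ := hm
    have hmz₂ : m < z₂ := lt_trans hmm₁ hm₁lt
    have hm0 : (0:ℝ) < m := lt_trans hz₁ hmz₁
    obtain ⟨hMm, hHMm⟩ := hM m ⟨hmz₁, hmz₂⟩
    set b : ℝ := M m with hbdef
    obtain ⟨hbz₂, hbz₃⟩ := hMm
    have hb0 : (0:ℝ) < b := by linarith
    set f : ℝ → ℝ := fun u => (δ + γ * τ / u ^ 2) / Real.sqrt (H m - H u) with hfdef
    -- positivity of H m - H u
    have hφ₁ : ∀ u : ℝ, m < u → u ≤ z₂ → 0 < H m - H u := by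
      intro u h1 h2
      have := hanti ⟨hmz₁.le, hmz₂.le⟩ ⟨by linarith, h2⟩ h1
      linarith
    have hφ₂ : ∀ u : ℝ, z₂ ≤ u → u < b → 0 < H m - H u := by
      intro u h1 h2
      have := hmono ⟨h1, by linarith⟩ ⟨hbz₂.le, hbz₃.le⟩ h2
      rw [hHMm] at this
      linarith
    have hφnn : ∀ u ∈ Icc m b, 0 ≤ H m - H u := by
      intro u hu
      rcases le_total u z₂ with h | h
      · rcases eq_or_lt_of_le hu.1 with h' | h'
        · rw [← h']; simp
        · exact (hφ₁ u h' h).le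
      · rcases eq_or_lt_of_le hu.2 with h' | h'
        · rw [h', hHMm]; simp
        · exact (hφ₂ u h h').le
    have hfnn : ∀ u : ℝ, 0 < u → 0 ≤ f u := by
      intro u hu
      apply div_nonneg _ (Real.sqrt_nonneg _)
      have : 0 < γ * τ / u ^ 2 := by positivity
      linarith
    -- continuity of f
    have hfcont : ContinuousOn f {u : ℝ | 0 < u ∧ 0 < H m - H u} := by
      apply ContinuousOn.div
      · exact hwcont.mono (fun x hx => hx.1)
      · exact Real.continuous_sqrt.comp_continuousOn
          (continuousOn_const.sub (HcontOn.mono fun x hx => hx.1))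
      · intro x hx
        exact ne_of_gt (Real.sqrt_pos.mpr hx.2)
    -- piece (i) : integrable on [m, m₁]
    have hFnegcont : ContinuousOn (fun s => -F s) {s : ℝ | 0 < s} := hFcont.neg
    obtain ⟨x₀, hx₀mem, hx₀min⟩ := isCompact_Icc.exists_isMinOn
      (nonempty_Icc.mpr (le_of_lt hmm₁)) (hFnegcont.mono (fun x hx => lt_of_lt_of_le hm0 hx.1))
    set c : ℝ := -F x₀ with hcdef
    have hcpos : 0 < c := by
      have : F x₀ < 0 := hFneg x₀ ⟨lt_of_lt_of_le hmz₁ hx₀mem.1, lt_of_le_of_lt hx₀mem.2 hm₁lt⟩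
      simp only [hcdef]; linarith
    have hφlow : ∀ u ∈ Ioc m m₁, c * (u - m) ≤ H m - H u := by
      intro u hu
      have hu0 : (0:ℝ) < u := lt_trans hm0 hu.1
      rw [hHdiff' m u hm0 hu0]
      have hb : ∀ s ∈ Icc m u, c ≤ -F s := fun s hs =>
        hx₀min ⟨hs.1, le_trans hs.2 hu.2⟩
      have := intervalIntegral.integral_mono_on hu.1.le intervalIntegrable_const
        ((hFi m u hm0 hu0).neg) hb
      rw [intervalIntegral.integral_const, smul_eq_mul] at this
      calc c * (u - m) = (u - m) * c := mul_comm _ _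
        _ ≤ _ := this
    have int₁ : IntervalIntegrable f volume m m₁ := by
      apply aux_left hmm₁ (C := B / Real.sqrt c)
      · apply hfcont.mono
        intro x hx
        exact ⟨lt_trans hm0 hx.1, hφ₁ x hx.1 (le_of_lt (lt_trans hx.2 hm₁lt))⟩
      · intro u hu
        have hu0 : (0:ℝ) < u := lt_trans hm0 hu.1
        have hφu : 0 < H m - H u := hφ₁ u hu.1 (le_of_lt (lt_of_lt_of_le hu.2 hm₁lt.le))
        have hlow := hφlow u ⟨hu.1, hu.2.le⟩
        have hclow : 0 < c * (u - m) := mul_pos hcpos (by linarith [hu.1])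
        rw [abs_of_nonneg (hfnn u hu0)]
        have h1 : f u ≤ B / Real.sqrt (c * (u - m)) := by
          have hsq : Real.sqrt (c * (u - m)) ≤ Real.sqrt (H m - H u) :=
            Real.sqrt_le_sqrt hlow
          have hsqpos : 0 < Real.sqrt (c * (u - m)) := Real.sqrt_pos.mpr hclow
          have hwB : δ + γ * τ / u ^ 2 ≤ B := hwleB u (by linarith [hu.1])
          calc f u ≤ B / Real.sqrt (H m - H u) :=
                (div_le_div_iff_of_pos_right (lt_of_lt_of_le hsqpos hsq)).mpr hwB
            _ ≤ B / Real.sqrt (c * (u - m)) :=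
                div_le_div_of_nonneg_left hBpos.le hsqpos hsq
        calc f u ≤ B / Real.sqrt (c * (u - m)) := h1
          _ = B / Real.sqrt c / Real.sqrt (u - m) := by
              rw [Real.sqrt_mul hcpos.le, div_div]
    -- piece (ii)
    set b₁ : ℝ := (z₂ + b) / 2 with hb₁def
    have hb₁gt : z₂ < b₁ := by simp only [hb₁def]; linarith
    have hb₁lt : b₁ < b := by simp only [hb₁def]; linarith
    have int₂ : IntervalIntegrable f volume m₁ b₁ := by
      apply ContinuousOn.intervalIntegrable
      apply hfcont.mono
      rw [uIcc_of_le (by linarith)]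
      intro x hx
      refine ⟨by linarith [hx.1], ?_⟩
      rcases le_total x z₂ with h | h
      · exact hφ₁ x (lt_of_lt_of_le hmm₁ hx.1) h
      · exact hφ₂ x h (lt_of_le_of_lt hx.2 hb₁lt)
    -- piece (iii)
    obtain ⟨x₁, hx₁mem, hx₁min⟩ := isCompact_Icc.exists_isMinOn
      (nonempty_Icc.mpr hb₁lt.le) (hFcont.mono (fun x hx => by
        simp only [mem_setOf_eq]; linarith [hx.1]))
    set c₂ : ℝ := F x₁ with hc₂def
    have hc₂pos : 0 < c₂ :=
      hFpos x₁ ⟨lt_of_lt_of_le hb₁gt hx₁mem.1, lt_of_le_of_lt hx₁mem.2 hbz₃⟩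
    have hφlow' : ∀ u ∈ Ico b₁ b, c₂ * (b - u) ≤ H m - H u := by
      intro u hu
      have hu0 : (0:ℝ) < u := by linarith [hu.1]
      have heq : H m - H u = ∫ s in u..b, F s := by
        rw [← hHMm]; exact hHdiff u b hu0 hb0
      rw [heq]
      have hbnd : ∀ s ∈ Icc u b, c₂ ≤ F s := fun s hs =>
        hx₁min ⟨le_trans hu.1 hs.1, hs.2⟩
      have := intervalIntegral.integral_mono_on hu.2.le intervalIntegrable_const
        (hFi u b hu0 hb0) hbnd
      rw [intervalIntegral.integral_const, smul_eq_mul] at this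
      calc c₂ * (b - u) = (b - u) * c₂ := mul_comm _ _
        _ ≤ _ := this
    have int₃ : IntervalIntegrable f volume b₁ b := by
      apply aux_right hb₁lt (C := B / Real.sqrt c₂)
      · apply hfcont.mono
        intro x hx
        exact ⟨by linarith [hx.1], hφ₂ x (by linarith [hx.1]) hx.2⟩
      · intro u hu
        have hu0 : (0:ℝ) < u := by linarith [hu.1]
        have hφu : 0 < H m - H u := hφ₂ u (by linarith [hu.1]) hu.2
        have hlow := hφlow' u ⟨hu.1.le, hu.2⟩
        have hclow : 0 < c₂ * (b - u) := mul_pos hc₂pos (by linarith [hu.2])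
        rw [abs_of_nonneg (hfnn u hu0)]
        have h1 : f u ≤ B / Real.sqrt (c₂ * (b - u)) := by
          have hsq : Real.sqrt (c₂ * (b - u)) ≤ Real.sqrt (H m - H u) :=
            Real.sqrt_le_sqrt hlow
          have hsqpos : 0 < Real.sqrt (c₂ * (b - u)) := Real.sqrt_pos.mpr hclow
          have hwB : δ + γ * τ / u ^ 2 ≤ B := hwleB u (by linarith [hu.1])
          calc f u ≤ B / Real.sqrt (H m - H u) :=
                (div_le_div_iff_of_pos_right (lt_of_lt_of_le hsqpos hsq)).mpr hwB
            _ ≤ B / Real.sqrt (c₂ * (b - u)) :=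
                div_le_div_of_nonneg_left hBpos.le hsqpos hsq
        calc f u ≤ B / Real.sqrt (c₂ * (b - u)) := h1
          _ = B / Real.sqrt c₂ / Real.sqrt (b - u) := by
              rw [Real.sqrt_mul hc₂pos.le, div_div]
    have int₂₃ : IntervalIntegrable f volume m₁ b := int₂.trans int₃
    -- split and bound
    have hsplit : (∫ u in m..b, f u) = (∫ u in m..m₁, f u) + ∫ u in m₁..b, f u :=
      (intervalIntegral.integral_add_adjacent_intervals int₁ int₂₃).symm
    have htail : 0 ≤ ∫ u in m₁..b, f u := by
      apply intervalIntegral.integral_nonneg (by linarith)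
      intro u hu
      exact hfnn u (by linarith [hu.1])
    -- lower bound on [m, m₁] piece
    set g : ℝ → ℝ := fun u => δ / (Real.sqrt K * (u - z₁)) with hgdef
    have hsqK : 0 < Real.sqrt K := Real.sqrt_pos.mpr hKpos
    have hgle : ∀ u ∈ Ioc m m₁, g u ≤ f u := by
      intro u hu
      have hu0 : (0:ℝ) < u := lt_trans hm0 hu.1
      have huz₁ : z₁ < u := lt_trans hmz₁ hu.1
      have hφu : 0 < H m - H u := hφ₁ u hu.1 (le_of_lt (lt_of_le_of_lt hu.2 hm₁lt))
      have hφpos : 0 < Real.sqrt (H m - H u) := Real.sqrt_pos.mpr hφu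
      have e1 : Real.sqrt (H m - H u) ≤ Real.sqrt K * (u - z₁) := by
        have := Real.sqrt_le_sqrt (hkey m u hmz₁ hu.1.le hu.2)
        rwa [Real.sqrt_mul hKpos.le, Real.sqrt_sq (by linarith)] at this
      calc g u = δ / (Real.sqrt K * (u - z₁)) := rfl
        _ ≤ δ / Real.sqrt (H m - H u) :=
            div_le_div_of_nonneg_left hδ.le hφpos e1
        _ ≤ (δ + γ * τ / u ^ 2) / Real.sqrt (H m - H u) := by
            apply (div_le_div_iff_of_pos_right hφpos).mpr
            have : 0 < γ * τ / u ^ 2 := by positivity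
            linarith
    have intg : IntervalIntegrable g volume m m₁ := by
      apply ContinuousOn.intervalIntegrable
      apply ContinuousOn.div continuousOn_const
      · exact continuousOn_const.mul (continuousOn_id.sub continuousOn_const)
      · intro x hx
        rw [uIcc_of_le hmm₁.le] at hx
        have : z₁ < x := lt_of_lt_of_le hmz₁ hx.1
        exact ne_of_gt (mul_pos hsqK (by linarith))
    have hmono₁ : (∫ u in m..m₁, g u) ≤ ∫ u in m..m₁, f u := by
      rw [intervalIntegral.integral_of_le hmm₁.le, intervalIntegral.integral_of_le hmm₁.le]
      apply setIntegral_mono_on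
      · rw [← intervalIntegrable_iff_integrableOn_Ioc_of_le hmm₁.le]; exact intg
      · rw [← intervalIntegrable_iff_integrableOn_Ioc_of_le hmm₁.le]; exact int₁
      · exact measurableSet_Ioc
      · exact hgle
    have hgval : (∫ u in m..m₁, g u) =
        (δ / Real.sqrt K) * (Real.log (m₁ - z₁) - Real.log (m - z₁)) := by
      have hderG : ∀ u ∈ uIcc m m₁,
          HasDerivAt (fun x => (δ / Real.sqrt K) * Real.log (x - z₁)) (g u) u := by
        intro u hu
        rw [uIcc_of_le hmm₁.le] at hu
        have huz : z₁ < u := lt_of_lt_of_le hmz₁ hu.1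
        have h2 : HasDerivAt (fun x : ℝ => x - z₁) 1 u := (hasDerivAt_id u).sub_const z₁
        have h3 : HasDerivAt (fun x : ℝ => Real.log (x - z₁)) ((u - z₁)⁻¹ * 1) u :=
          by have := (Real.hasDerivAt_log (by linarith : u - z₁ ≠ 0)).comp u h2; exact this
        have h4 := h3.const_mul (δ / Real.sqrt K)
        refine h4.congr_deriv ?_; symm
        show δ / (Real.sqrt K * (u - z₁)) = δ / Real.sqrt K * ((u - z₁)⁻¹ * 1)
        rw [mul_one, ← div_div]
        exact div_eq_mul_inv _ _
      have := intervalIntegral.integral_eq_sub_of_hasDerivAt hderG intg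
      rw [this]
      ring
    rw [← hbdef] at *
    calc (δ / Real.sqrt K) * (Real.log (m₁ - z₁) - Real.log (m - z₁))
        = ∫ u in m..m₁, g u := hgval.symm
      _ ≤ ∫ u in m..m₁, f u := hmono₁
      _ ≤ (∫ u in m..m₁, f u) + ∫ u in m₁..b, f u := by linarith
      _ = ∫ u in m..b, f u := hsplit.symm
  -- conclude
  have hsqK : 0 < Real.sqrt K := Real.sqrt_pos.mpr hKpos
  have hlogbot : Tendsto (fun m => Real.log (m - z₁)) (𝓝[>] z₁) atBot := by
    apply Real.tendsto_log_nhdsGT_zero.comp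
    rw [tendsto_nhdsWithin_iff]
    constructor
    · have h0 : Tendsto (fun m : ℝ => m - z₁) (𝓝 z₁) (𝓝 0) := by
        have := (continuous_id.sub (continuous_const (y := z₁))).tendsto z₁
        convert this using 2 <;> simp [Pi.sub_apply]
      exact h0.mono_left nhdsWithin_le_nhds
    · filter_upwards [self_mem_nhdsWithin] with x hx
      exact sub_pos.mpr (show z₁ < x from hx)
  have hG : Tendsto (fun m => (δ / Real.sqrt K) *
      (Real.log (m₁ - z₁) - Real.log (m - z₁))) (𝓝[>] z₁) atTop := by
    apply Tendsto.const_mul_atTop (by positivity : (0:ℝ) < δ / Real.sqrt K)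
    have : Tendsto (fun m => -Real.log (m - z₁)) (𝓝[>] z₁) atTop :=
      tendsto_neg_atBot_atTop.comp hlogbot
    have := tendsto_atTop_add_const_left (𝓝[>] z₁) (Real.log (m₁ - z₁)) this
    simpa [sub_eq_add_neg] using this
  apply tendsto_atTop_mono' _ _ hG
  filter_upwards [Ioo_mem_nhdsGT_of_mem (⟨le_refl z₁, hm₁gt⟩ : z₁ ∈ Ico z₁ m₁)] with m hm
  exact main m hm
end

section
/- Assume B < A < C (strong competition). Then there exists τ̂ > 0 such that for every τ ∈ (0, τ̂) and every triple 0 < z₁ < z₂ < z₃ with h(u, τ) > 0 for u ∈ (0, z₁) ∪ (z₂, z₃) and h(u, τ) < 0 for u ∈ (z₁, z₂) ∪ (z₃, ∞), one has z₁·(a₁ − b₁·z₁) − c₁τ < 0, z₂·(a₁ − b₁·z₂) − c₁τ > 0, and z₃·(a₁ − b₁·z₃) − c₁τ < 0. -/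
open Set

lemma hfun_num (a₁ a₂ b₁ b₂ c₁ c₂ γ u τ : ℝ) (hu : u ≠ 0) :
    u^3*(a₁ - b₁*u) - c₁*τ*u^2 - γ*τ*(a₂*u - b₂*u^2 - c₂*τ)
      = hfun a₁ a₂ b₁ b₂ c₁ c₂ γ u τ * u^2 := by
  unfold hfun; field_simp

lemma hfun_of_num_neg (a₁ a₂ b₁ b₂ c₁ c₂ γ u τ : ℝ) (hu : 0 < u)
    (h : u^3*(a₁ - b₁*u) - c₁*τ*u^2 - γ*τ*(a₂*u - b₂*u^2 - c₂*τ) < 0) :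
    hfun a₁ a₂ b₁ b₂ c₁ c₂ γ u τ < 0 := by
  rw [hfun_num a₁ a₂ b₁ b₂ c₁ c₂ γ u τ hu.ne'] at h
  by_contra hcon
  push_neg at hcon
  exact absurd (mul_nonneg hcon (sq_nonneg u)) (not_le.mpr (by convert h using 2 <;> ring))

lemma hfun_of_num_pos (a₁ a₂ b₁ b₂ c₁ c₂ γ u τ : ℝ) (hu : 0 < u)
    (h : 0 < u^3*(a₁ - b₁*u) - c₁*τ*u^2 - γ*τ*(a₂*u - b₂*u^2 - c₂*τ)) :
    0 < hfun a₁ a₂ b₁ b₂ c₁ c₂ γ u τ := by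
  rw [hfun_num a₁ a₂ b₁ b₂ c₁ c₂ γ u τ hu.ne'] at h
  by_contra hcon
  push_neg at hcon
  have : hfun a₁ a₂ b₁ b₂ c₁ c₂ γ u τ * u^2 ≤ 0 :=
    mul_nonpos_of_nonpos_of_nonneg hcon (sq_nonneg u)
  linarith

lemma g_eq (a₁ a₂ b₁ b₂ c₁ c₂ γ u τ : ℝ) (hu : u ≠ 0) :
    u * (a₁ - b₁*u) - c₁*τ
      = hfun a₁ a₂ b₁ b₂ c₁ c₂ γ u τ + γ*τ*(a₂*u - b₂*u^2 - c₂*τ)/u^2 := by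
  unfold hfun; field_simp; ring

lemma aux_S1 (a₁ a₂ b₁ b₂ c₁ c₂ γ κ τ : ℝ) (hτ0 : 0 < τ) (hκ0 : 0 < κ)
    (hb₁ : 0 < b₁) (hc₁ : 0 < c₁)
    (hτD : τ * (κ^3*a₁ + γ*b₂*κ^2 + 1) < γ*(a₂*κ - c₂)) :
    (κ*τ)^3*(a₁ - b₁*(κ*τ)) - c₁*τ*(κ*τ)^2 - γ*τ*(a₂*(κ*τ) - b₂*(κ*τ)^2 - c₂*τ) < 0 := by
  have h1 : (κ^3*a₁ - c₁*κ^2 + γ*b₂*κ^2)*τ - b₁*κ^4*τ^2 - γ*(a₂*κ - c₂) < 0 := by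
    nlinarith [mul_nonneg hτ0.le (mul_nonneg hc₁.le (sq_nonneg κ)),
      mul_pos hb₁ (mul_pos (pow_pos hκ0 4) (pow_pos hτ0 2))]
  calc (κ*τ)^3*(a₁ - b₁*(κ*τ)) - c₁*τ*(κ*τ)^2 - γ*τ*(a₂*(κ*τ) - b₂*(κ*τ)^2 - c₂*τ)
      = ((κ^3*a₁ - c₁*κ^2 + γ*b₂*κ^2)*τ - b₁*κ^4*τ^2 - γ*(a₂*κ - c₂)) * τ^2 := by ring
    _ < 0 := mul_neg_of_neg_of_pos h1 (pow_pos hτ0 2)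

lemma aux_S2 (a₁ a₂ b₁ b₂ c₁ c₂ γ L s : ℝ) (hs0 : 0 < s) (hL0 : 0 < L)
    (hb₁ : 0 < b₁) (hc₁ : 0 < c₁)
    (hL2 : 2*a₁*L^2 = γ*a₂)
    (hsD : s*(γ*b₂*L^2 + γ*c₂ + 1) < L*γ*a₂/2) :
    (L*s)^3*(a₁ - b₁*(L*s)) - c₁*s^2*(L*s)^2 - γ*s^2*(a₂*(L*s) - b₂*(L*s)^2 - c₂*s^2) < 0 := by
  have hnn : (0:ℝ) ≤ b₁*L^4 + c₁*L^2 := by positivity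
  have h1 : s*(γ*b₂*L^2 + γ*c₂ - b₁*L^4 - c₁*L^2) - L*γ*a₂/2 < 0 := by
    nlinarith [mul_nonneg hs0.le hnn]
  have hz : 2*a₁*L^2 - γ*a₂ = 0 := by rw [hL2]; ring
  have key : (L*s)^3*(a₁ - b₁*(L*s)) - c₁*s^2*(L*s)^2 - γ*s^2*(a₂*(L*s) - b₂*(L*s)^2 - c₂*s^2)
      = (s*(γ*b₂*L^2 + γ*c₂ - b₁*L^4 - c₁*L^2) - L*γ*a₂/2)*s^3
        + (2*a₁*L^2 - γ*a₂)*(L*s^3)/2 := by ring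
  rw [key, hz]
  have := mul_neg_of_neg_of_pos h1 (pow_pos hs0 3)
  linarith

lemma aux_S3 (a₁ a₂ b₁ b₂ c₁ c₂ γ τ p : ℝ) (hτ0 : 0 < τ) (hp0 : 0 < p)
    (hγ : 0 < γ) (hc₂ : 0 < c₂)
    (e1 : a₂*p - b₂*p^2 = p*a₂/2)
    (hτD : τ*(c₁*p^2 + γ*p*a₂/2) < p^3*(a₁ - b₁*p)) :
    0 < p^3*(a₁ - b₁*p) - c₁*τ*p^2 - γ*τ*(a₂*p - b₂*p^2 - c₂*τ) := by
  have h2 : γ*τ*(a₂*p - b₂*p^2 - c₂*τ) = γ*τ*(p*a₂/2) - γ*c₂*τ^2 := by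
    rw [show a₂*p - b₂*p^2 - c₂*τ = (a₂*p - b₂*p^2) - c₂*τ from by ring, e1]; ring
  rw [h2]
  nlinarith [mul_pos (mul_pos hγ hc₂) (pow_pos hτ0 2)]

lemma aux_S4 (a₁ a₂ b₁ b₂ c₁ c₂ γ τ p : ℝ) (hτ0 : 0 < τ) (hp0 : 0 < p)
    (hγ : 0 < γ) (hc₂ : 0 < c₂)
    (e1 : a₂*p - b₂*p^2 ≤ 0)
    (hτD : τ*(c₁*p^2) < p^3*(a₁ - b₁*p)) :
    0 < p^3*(a₁ - b₁*p) - c₁*τ*p^2 - γ*τ*(a₂*p - b₂*p^2 - c₂*τ) := by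
  nlinarith [mul_pos (mul_pos hγ hc₂) (pow_pos hτ0 2),
    mul_nonpos_of_nonneg_of_nonpos (mul_pos hγ hτ0).le e1]

lemma aux_G1 (a₁ b₁ c₁ κ τ z₁ : ℝ) (hz₁ : 0 < z₁) (hb₁ : 0 < b₁)
    (ha₁ : 0 < a₁) (hτ0 : 0 < τ) (hza : z₁ ≤ κ*τ) (hκa : κ*a₁ < c₁) :
    z₁ * (a₁ - b₁ * z₁) - c₁ * τ < 0 := by
  nlinarith [mul_le_mul_of_nonneg_left hza ha₁.le,
    mul_lt_mul_of_pos_right hκa hτ0, mul_pos hb₁ (mul_pos hz₁ hz₁)]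

lemma aux_G2 (a₁ b₁ c₁ τ z₂ p2 M : ℝ) (hp20 : 0 < p2) (hM : 0 < M)
    (hp2z2 : p2 ≤ z₂) (hMz : M ≤ a₁ - b₁*z₂) (hsM : c₁ * τ < p2*M) :
    0 < z₂ * (a₁ - b₁ * z₂) - c₁ * τ := by
  have h1 : p2 * M ≤ z₂ * (a₁ - b₁*z₂) :=
    mul_le_mul hp2z2 hMz hM.le (by linarith)
  linarith

lemma aux_q (a₂ b₂ c₂ τ z₃ : ℝ) (hz₃ : 0 < z₃) (hc₂ : 0 < c₂) (hτ0 : 0 < τ)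
    (hb : a₂ < b₂ * z₃) : a₂*z₃ - b₂*z₃^2 - c₂*τ < 0 := by
  have e : a₂*z₃ - b₂*z₃^2 = z₃*(a₂ - b₂*z₃) := by ring
  have h1 : z₃*(a₂ - b₂*z₃) < 0 := mul_neg_of_pos_of_neg hz₃ (by linarith)
  have h2 : 0 < c₂*τ := mul_pos hc₂ hτ0
  linarith


set_option maxHeartbeats 1000000 in
/-- Lemma 6.6(i): in the strong competition case `B < A < C`, for all small `τ > 0`
the values of `f(z, τ/z) = z(a₁ − b₁z) − c₁τ` at the three zeros `z₁ < z₂ < z₃`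
of `h(·,τ)` are negative, positive, negative respectively. -/
theorem stmt_13 (a₁ a₂ b₁ b₂ c₁ c₂ γ δ : ℝ)
    (ha₁ : 0 < a₁) (ha₂ : 0 < a₂) (hb₁ : 0 < b₁) (hb₂ : 0 < b₂)
    (hc₁ : 0 < c₁) (hc₂ : 0 < c₂) (hγ : 0 < γ) (hδ : 0 < δ)
    (hBA : b₁ / b₂ < a₁ / a₂) (hAC : a₁ / a₂ < c₁ / c₂) :
    ∃ τhat > 0, ∀ τ : ℝ, τ ∈ Ioo 0 τhat →
      ∀ z₁ z₂ z₃ : ℝ, 0 < z₁ → z₁ < z₂ → z₂ < z₃ →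
      (∀ u : ℝ, u ∈ Ioo 0 z₁ ∪ Ioo z₂ z₃ →
        0 < hfun a₁ a₂ b₁ b₂ c₁ c₂ γ u τ) →
      (∀ u : ℝ, u ∈ Ioo z₁ z₂ ∪ Ioi z₃ →
        hfun a₁ a₂ b₁ b₂ c₁ c₂ γ u τ < 0) →
      z₁ * (a₁ - b₁ * z₁) - c₁ * τ < 0 ∧
      0 < z₂ * (a₁ - b₁ * z₂) - c₁ * τ ∧
      z₃ * (a₁ - b₁ * z₃) - c₁ * τ < 0 := by
  -- basic consequences of B < A < C
  have hACm : a₁ * c₂ < c₁ * a₂ := (div_lt_div_iff₀ ha₂ hc₂).mp hAC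
  have hBAm : b₁ * a₂ < a₁ * b₂ := (div_lt_div_iff₀ hb₂ ha₂).mp hBA
  have hCA : c₂ / a₂ < c₁ / a₁ := (div_lt_div_iff₀ ha₂ ha₁).mpr (by linarith [hACm])
  set κ : ℝ := (c₂/a₂ + c₁/a₁)/2 with hκdef
  have hκ1 : c₂/a₂ < κ := by rw [hκdef]; linarith
  have hκ2 : κ < c₁/a₁ := by rw [hκdef]; linarith
  have hκ0 : 0 < κ := lt_trans (div_pos hc₂ ha₂) hκ1
  have hκa : κ * a₁ < c₁ := by
    have := (lt_div_iff₀ ha₁).mp hκ2; linarith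
  have hE : 0 < γ * (a₂*κ - c₂) := by
    have h1 : c₂ < κ * a₂ := (div_lt_iff₀ ha₂).mp hκ1
    have h2 : 0 < a₂*κ - c₂ := by linarith
    exact mul_pos hγ h2
  set L : ℝ := Real.sqrt (γ*a₂/(2*a₁)) with hLdef
  have hL0 : 0 < L := Real.sqrt_pos.mpr (by positivity)
  have hL2 : 2*a₁*L^2 = γ*a₂ := by
    rw [hLdef, Real.sq_sqrt (by positivity : (0:ℝ) ≤ γ*a₂/(2*a₁))]
    field_simp
  set p3 : ℝ := a₂/(2*b₂) with hp3def
  have hp30 : 0 < p3 := by rw [hp3def]; positivity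
  set p4 : ℝ := (a₂/b₂ + a₁/b₁)/2 with hp4def
  have hXY : a₂/b₂ < a₁/b₁ := (div_lt_div_iff₀ hb₂ hb₁).mpr (by linarith [hBAm])
  have hp4X : a₂/b₂ < p4 := by rw [hp4def]; linarith
  have hp4Y : p4 < a₁/b₁ := by rw [hp4def]; linarith
  have hp40 : 0 < p4 := lt_trans (div_pos ha₂ hb₂) hp4X
  have hp34 : p3 < p4 := by
    have h1 : p3 = (a₂/b₂)/2 := by rw [hp3def]; ring
    have h2 : (0:ℝ) < a₂/b₂ := div_pos ha₂ hb₂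
    rw [h1]; linarith
  have hM : 0 < a₁ - b₁*p3 := by
    have hp3Y : p3 < a₁/b₁ := lt_trans hp34 hp4Y
    have := (lt_div_iff₀ hb₁).mp hp3Y
    linarith
  set M : ℝ := a₁ - b₁*p3 with hMdef
  have hp3half : a₂*p3 - b₂*p3^2 = p3*a₂/2 := by rw [hp3def]; field_simp; ring
  have hp4b : a₂ < b₂ * p4 := by
    have := (div_lt_iff₀ hb₂).mp hp4X; linarith
  have hP4 : 0 < a₁ - b₁*p4 := by
    have := (lt_div_iff₀ hb₁).mp hp4Y; linarith
  have he1 : a₂*p4 - b₂*p4^2 ≤ 0 := by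
    have e : a₂*p4 - b₂*p4^2 = p4*(a₂ - b₂*p4) := by ring
    rw [e]
    exact mul_nonpos_of_nonneg_of_nonpos hp40.le (by linarith)
  -- thresholds
  set T1 : ℝ := γ*(a₂*κ - c₂) / (κ^3*a₁ + γ*b₂*κ^2 + 1) with hT1def
  have hD1 : 0 < κ^3*a₁ + γ*b₂*κ^2 + 1 := by positivity
  have hT1 : 0 < T1 := by rw [hT1def]; exact div_pos hE hD1
  set T2 : ℝ := (L*γ*a₂/(2*(γ*b₂*L^2 + γ*c₂ + 1)))^2 with hT2def
  have hD2 : 0 < γ*b₂*L^2 + γ*c₂ + 1 := by positivity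
  have hT2' : 0 < L*γ*a₂/(2*(γ*b₂*L^2 + γ*c₂ + 1)) := by positivity
  have hT2 : 0 < T2 := by rw [hT2def]; positivity
  set T3 : ℝ := p3^3*(a₁ - b₁*p3) / (c₁*p3^2 + γ*p3*a₂/2) with hT3def
  have hD3 : 0 < c₁*p3^2 + γ*p3*a₂/2 := by positivity
  have hT3 : 0 < T3 := by rw [hT3def]; exact div_pos (by positivity) hD3
  set T4 : ℝ := p4^3*(a₁ - b₁*p4) / (c₁*p4^2) with hT4def
  have hD4 : 0 < c₁*p4^2 := by positivity
  have hT4 : 0 < T4 := by rw [hT4def]; exact div_pos (by positivity) hD4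
  set T5 : ℝ := (L/κ)^2 with hT5def
  have hT5' : 0 < L/κ := by positivity
  have hT5 : 0 < T5 := by rw [hT5def]; positivity
  set T6 : ℝ := (p3/L)^2 with hT6def
  have hT6' : 0 < p3/L := by positivity
  have hT6 : 0 < T6 := by rw [hT6def]; positivity
  set T7 : ℝ := (L*M/c₁)^2 with hT7def
  have hT7' : 0 < L*M/c₁ := by positivity
  have hT7 : 0 < T7 := by rw [hT7def]; positivity
  clear_value κ L p3 p4 M T1 T2 T3 T4 T5 T6 T7
  refine ⟨min T1 (min T2 (min T3 (min T4 (min T5 (min T6 T7))))),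
    lt_min hT1 (lt_min hT2 (lt_min hT3 (lt_min hT4 (lt_min hT5 (lt_min hT6 hT7))))), ?_⟩
  rintro τ ⟨hτ0, hτT⟩ z₁ z₂ z₃ hz₁ h12 h23 hpos hneg
  have hτ1 : τ < T1 := lt_of_lt_of_le hτT (min_le_left _ _)
  have hτ2 : τ < T2 := lt_of_lt_of_le hτT (le_trans (min_le_right _ _) (min_le_left _ _))
  have hτ3 : τ < T3 := lt_of_lt_of_le hτT (le_trans (min_le_right _ _) (le_trans (min_le_right _ _) (min_le_left _ _)))
  have hτ4 : τ < T4 := lt_of_lt_of_le hτT (le_trans (min_le_right _ _) (le_trans (min_le_right _ _) (le_trans (min_le_right _ _) (min_le_left _ _))))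
  have hτ5 : τ < T5 := lt_of_lt_of_le hτT (le_trans (min_le_right _ _) (le_trans (min_le_right _ _) (le_trans (min_le_right _ _) (le_trans (min_le_right _ _) (min_le_left _ _)))))
  have hτ6 : τ < T6 := lt_of_lt_of_le hτT (le_trans (min_le_right _ _) (le_trans (min_le_right _ _) (le_trans (min_le_right _ _) (le_trans (min_le_right _ _) (le_trans (min_le_right _ _) (min_le_left _ _))))))
  have hτ7 : τ < T7 := lt_of_lt_of_le hτT (le_trans (min_le_right _ _) (le_trans (min_le_right _ _) (le_trans (min_le_right _ _) (le_trans (min_le_right _ _) (le_trans (min_le_right _ _) (min_le_right _ _))))))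
  set s : ℝ := Real.sqrt τ with hsdef
  have hs0 : 0 < s := by rw [hsdef]; exact Real.sqrt_pos.mpr hτ0
  have hs2 : s^2 = τ := by rw [hsdef]; exact Real.sq_sqrt hτ0.le
  have sqrt_lt : ∀ c : ℝ, 0 < c → τ < c^2 → s < c := by
    intro c hc hlt
    rw [hsdef]
    exact (Real.sqrt_lt' hc).mpr hlt
  clear_value s
  set p1 : ℝ := κ*τ with hp1def
  set p2 : ℝ := L*s with hp2def
  clear_value p1 p2
  have hp10 : 0 < p1 := by rw [hp1def]; positivity
  have hp20 : 0 < p2 := by rw [hp2def]; positivity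
  -- orderings of test points
  have h12p : p1 < p2 := by
    have hsL : s < L/κ := sqrt_lt _ hT5' (by rw [← hT5def]; exact hτ5)
    have hks : κ * s < L := by
      have := (lt_div_iff₀ hκ0).mp hsL; linarith
    calc p1 = κ*s*s := by rw [hp1def, ← hs2]; ring
    _ < L*s := mul_lt_mul_of_pos_right hks hs0
    _ = p2 := hp2def.symm
  have h23p : p2 < p3 := by
    have hsp : s < p3/L := sqrt_lt _ hT6' (by rw [← hT6def]; exact hτ6)
    have := (lt_div_iff₀ hL0).mp hsp
    rw [hp2def]; linarith
  -- sign facts at the four test points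
  have hS1 : hfun a₁ a₂ b₁ b₂ c₁ c₂ γ p1 τ < 0 := by
    apply hfun_of_num_neg _ _ _ _ _ _ _ _ _ hp10
    have hτD : τ * (κ^3*a₁ + γ*b₂*κ^2 + 1) < γ*(a₂*κ - c₂) := by
      rw [hT1def] at hτ1
      exact (lt_div_iff₀ hD1).mp hτ1
    rw [hp1def]
    exact aux_S1 a₁ a₂ b₁ b₂ c₁ c₂ γ κ τ hτ0 hκ0 hb₁ hc₁ hτD
  have hS2 : hfun a₁ a₂ b₁ b₂ c₁ c₂ γ p2 τ < 0 := by
    apply hfun_of_num_neg _ _ _ _ _ _ _ _ _ hp20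
    have hsD : s*(γ*b₂*L^2 + γ*c₂ + 1) < L*γ*a₂/2 := by
      have h1 : s < L*γ*a₂/(2*(γ*b₂*L^2 + γ*c₂ + 1)) :=
        sqrt_lt _ hT2' (by rw [← hT2def]; exact hτ2)
      calc s * (γ*b₂*L^2 + γ*c₂ + 1)
          < (L*γ*a₂/(2*(γ*b₂*L^2 + γ*c₂ + 1))) * (γ*b₂*L^2 + γ*c₂ + 1) :=
            mul_lt_mul_of_pos_right h1 hD2
        _ = L*γ*a₂/2 := by field_simp
    rw [hp2def, ← hs2]
    exact aux_S2 a₁ a₂ b₁ b₂ c₁ c₂ γ L s hs0 hL0 hb₁ hc₁ hL2 hsD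
  have hS3 : 0 < hfun a₁ a₂ b₁ b₂ c₁ c₂ γ p3 τ := by
    apply hfun_of_num_pos _ _ _ _ _ _ _ _ _ hp30
    have hτD : τ*(c₁*p3^2 + γ*p3*a₂/2) < p3^3*(a₁ - b₁*p3) := by
      rw [hT3def] at hτ3
      exact (lt_div_iff₀ hD3).mp hτ3
    exact aux_S3 a₁ a₂ b₁ b₂ c₁ c₂ γ τ p3 hτ0 hp30 hγ hc₂ hp3half hτD
  have hS4 : 0 < hfun a₁ a₂ b₁ b₂ c₁ c₂ γ p4 τ := by
    apply hfun_of_num_pos _ _ _ _ _ _ _ _ _ hp40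
    have hτD : τ*(c₁*p4^2) < p4^3*(a₁ - b₁*p4) := by
      rw [hT4def] at hτ4
      exact (lt_div_iff₀ hD4).mp hτ4
    exact aux_S4 a₁ a₂ b₁ b₂ c₁ c₂ γ τ p4 hτ0 hp40 hγ hc₂ he1 hτD
  -- interval gymnastics
  have hz1p1 : z₁ ≤ p1 := by
    by_contra hcon
    push_neg at hcon
    exact absurd (hpos p1 (Or.inl ⟨hp10, hcon⟩)) (not_lt.mpr hS1.le)
  have hz2p3 : z₂ ≤ p3 := by
    by_contra hcon
    push_neg at hcon
    have hz1p3 : z₁ < p3 := lt_of_le_of_lt hz1p1 (lt_trans h12p h23p)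
    exact absurd (hneg p3 (Or.inl ⟨hz1p3, hcon⟩)) (not_lt.mpr hS3.le)
  have hp3z3 : p3 ≤ z₃ := by
    by_contra hcon
    push_neg at hcon
    exact absurd (hneg p3 (Or.inr hcon)) (not_lt.mpr hS3.le)
  have hp2z2 : p2 ≤ z₂ := by
    by_contra hcon
    push_neg at hcon
    have hlt : p2 < z₃ := lt_of_lt_of_le h23p hp3z3
    exact absurd (hpos p2 (Or.inr ⟨hcon, hlt⟩)) (not_lt.mpr hS2.le)
  have hp4z3 : p4 ≤ z₃ := by
    by_contra hcon
    push_neg at hcon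
    exact absurd (hneg p4 (Or.inr hcon)) (not_lt.mpr hS4.le)
  have hz30 : 0 < z₃ := lt_trans hz₁ (lt_trans h12 h23)
  refine ⟨?_, ?_, ?_⟩
  · exact aux_G1 a₁ b₁ c₁ κ τ z₁ hz₁ hb₁ ha₁ hτ0 (by rw [← hp1def]; exact hz1p1) hκa
  · have hMz : M ≤ a₁ - b₁*z₂ := by
      have := mul_le_mul_of_nonneg_left hz2p3 hb₁.le
      rw [hMdef]; linarith
    have hsM : c₁ * τ < p2*M := by
      have hsc : s < L*M/c₁ := sqrt_lt _ hT7' (by rw [← hT7def]; exact hτ7)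
      have h1 : s * c₁ < L*M := by
        have := (lt_div_iff₀ hc₁).mp hsc; linarith
      calc c₁ * τ = (s * c₁) * s := by rw [← hs2]; ring
      _ < (L*M)*s := mul_lt_mul_of_pos_right h1 hs0
      _ = p2*M := by rw [hp2def]; ring
    exact aux_G2 a₁ b₁ c₁ τ z₂ p2 M hp20 hM hp2z2 hMz hsM
  · have hNz3 : z₃^3*(a₁ - b₁*z₃) - c₁*τ*z₃^2 - γ*τ*(a₂*z₃ - b₂*z₃^2 - c₂*τ) ≤ 0 := by
      have hcont : ContinuousAt (fun u : ℝ => u^3*(a₁ - b₁*u) - c₁*τ*u^2 - γ*τ*(a₂*u - b₂*u^2 - c₂*τ)) z₃ := by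
        fun_prop
      have htend := hcont.continuousWithinAt (s := Ioi z₃)
      refine le_of_tendsto htend ?_
      filter_upwards [self_mem_nhdsWithin] with u hu
      have hu3 : z₃ < u := hu
      have hu0 : 0 < u := lt_trans hz30 hu3
      have hh : hfun a₁ a₂ b₁ b₂ c₁ c₂ γ u τ < 0 := hneg u (Or.inr hu3)
      rw [hfun_num a₁ a₂ b₁ b₂ c₁ c₂ γ u τ hu0.ne']
      exact (mul_neg_of_neg_of_pos hh (pow_pos hu0 2)).le
    have hhz3 : hfun a₁ a₂ b₁ b₂ c₁ c₂ γ z₃ τ ≤ 0 := by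
      rw [hfun_num a₁ a₂ b₁ b₂ c₁ c₂ γ z₃ τ hz30.ne'] at hNz3
      by_contra hcon
      push_neg at hcon
      have := mul_pos hcon (pow_pos hz30 2)
      linarith
    have hq : a₂*z₃ - b₂*z₃^2 - c₂*τ < 0 := by
      refine aux_q a₂ b₂ c₂ τ z₃ hz30 hc₂ hτ0 ?_
      calc a₂ < b₂ * p4 := hp4b
      _ ≤ b₂ * z₃ := mul_le_mul_of_nonneg_left hp4z3 hb₂.le
    have hfrac : γ*τ*(a₂*z₃ - b₂*z₃^2 - c₂*τ)/z₃^2 < 0 :=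
      div_neg_of_neg_of_pos (mul_neg_of_pos_of_neg (mul_pos hγ hτ0) hq) (pow_pos hz30 2)
    rw [g_eq a₁ a₂ b₁ b₂ c₁ c₂ γ z₃ τ hz30.ne']
    linarith
end

section
/- For τ > 0 with 4b₁c₁τ < a₁² and 4b₂c₂τ < a₂², define Z₁(f,τ) := (a₁ − √(a₁² − 4b₁c₁τ))/(2b₁), Z₂(f,τ) := (a₁ + √(a₁² − 4b₁c₁τ))/(2b₁), Z₁(g,τ) := (a₂ − √(a₂² − 4b₂c₂τ))/(2b₂), Z₂(g,τ) := (a₂ + √(a₂² − 4b₂c₂τ))/(2b₂). There exists τ̂ > 0 such that for every τ ∈ (0, τ̂): if B < A < C then Z₁(g,τ) < Z₁(f,τ) < Z₂(g,τ) < Z₂(f,τ); and if C < A < B then Z₁(f,τ) < Z₁(g,τ) < Z₂(f,τ) < Z₂(g,τ). -/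
open Set

set_option maxHeartbeats 1600000 in
lemma key_root_order (a₁ a₂ b₁ b₂ c₁ c₂ : ℝ)
    (ha₁ : 0 < a₁) (ha₂ : 0 < a₂) (hb₁ : 0 < b₁) (hb₂ : 0 < b₂)
    (hc₁ : 0 < c₁) (hc₂ : 0 < c₂)
    (hB : b₁ * a₂ < b₂ * a₁) (hC : a₁ * c₂ < a₂ * c₁) :
    ∃ τhat > 0, ∀ τ : ℝ, τ ∈ Ioo 0 τhat →
      4 * b₁ * c₁ * τ < a₁ ^ 2 → 4 * b₂ * c₂ * τ < a₂ ^ 2 →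
        (a₂ - Real.sqrt (a₂ ^ 2 - 4 * b₂ * c₂ * τ)) / (2 * b₂) <
          (a₁ - Real.sqrt (a₁ ^ 2 - 4 * b₁ * c₁ * τ)) / (2 * b₁) ∧
        (a₁ - Real.sqrt (a₁ ^ 2 - 4 * b₁ * c₁ * τ)) / (2 * b₁) <
          (a₂ + Real.sqrt (a₂ ^ 2 - 4 * b₂ * c₂ * τ)) / (2 * b₂) ∧
        (a₂ + Real.sqrt (a₂ ^ 2 - 4 * b₂ * c₂ * τ)) / (2 * b₂) <
          (a₁ + Real.sqrt (a₁ ^ 2 - 4 * b₁ * c₁ * τ)) / (2 * b₁) := by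
  refine ⟨min (min (a₂ * (a₂ * c₁ - a₁ * c₂) / (2 * c₁ * b₂ * c₂))
      (a₁ * a₂ / (4 * b₂ * c₁))) (a₁ * (b₂ * a₁ - b₁ * a₂) / (2 * b₁ * b₂ * c₁)), ?_, ?_⟩
  · have h1 : 0 < a₂ * c₁ - a₁ * c₂ := by linarith
    have h2 : 0 < b₂ * a₁ - b₁ * a₂ := by linarith
    positivity
  intro τ hτ hD₁ hD₂
  obtain ⟨hτ0, hτT⟩ := hτ
  have hT1 : τ < a₂ * (a₂ * c₁ - a₁ * c₂) / (2 * c₁ * b₂ * c₂) :=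
    lt_of_lt_of_le hτT (le_trans (min_le_left _ _) (min_le_left _ _))
  have hT2 : τ < a₁ * a₂ / (4 * b₂ * c₁) :=
    lt_of_lt_of_le hτT (le_trans (min_le_left _ _) (min_le_right _ _))
  have hT3 : τ < a₁ * (b₂ * a₁ - b₁ * a₂) / (2 * b₁ * b₂ * c₁) :=
    lt_of_lt_of_le hτT (min_le_right _ _)
  have hT1' : 2 * c₁ * b₂ * c₂ * τ < a₂ * (a₂ * c₁ - a₁ * c₂) := by
    rw [lt_div_iff₀ (by positivity)] at hT1; linarith
  have hT2' : 4 * b₂ * c₁ * τ < a₁ * a₂ := by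
    rw [lt_div_iff₀ (by positivity)] at hT2; linarith
  have hT3' : 2 * b₁ * b₂ * c₁ * τ < a₁ * (b₂ * a₁ - b₁ * a₂) := by
    rw [lt_div_iff₀ (by positivity)] at hT3; linarith
  set s₁ := Real.sqrt (a₁ ^ 2 - 4 * b₁ * c₁ * τ) with hs₁def
  set s₂ := Real.sqrt (a₂ ^ 2 - 4 * b₂ * c₂ * τ) with hs₂def
  have hs₁0 : 0 ≤ s₁ := Real.sqrt_nonneg _
  have hs₂0 : 0 ≤ s₂ := Real.sqrt_nonneg _
  have hs₁sq : s₁ ^ 2 = a₁ ^ 2 - 4 * b₁ * c₁ * τ := Real.sq_sqrt (by linarith)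
  have hs₂sq : s₂ ^ 2 = a₂ ^ 2 - 4 * b₂ * c₂ * τ := Real.sq_sqrt (by linarith)
  have hs₁le : s₁ ≤ a₁ := by nlinarith [mul_pos (mul_pos hb₁ hc₁) hτ0]
  have hs₂le : s₂ ≤ a₂ := by nlinarith [mul_pos (mul_pos hb₂ hc₂) hτ0]
  -- conjugate identities
  have hf : (a₁ - s₁) * (a₁ + s₁) = 4 * b₁ * c₁ * τ := by linear_combination -hs₁sq
  have hg : (a₂ - s₂) * (a₂ + s₂) = 4 * b₂ * c₂ * τ := by linear_combination -hs₂sq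
  -- upper bound for a₁ - s₁ : (a₁ - s₁) * a₁ ≤ 4b₁c₁τ
  have hQub : (a₁ - s₁) * a₁ ≤ 4 * b₁ * c₁ * τ := by
    nlinarith [hf, mul_nonneg (sub_nonneg.2 hs₁le) hs₁0]
  refine ⟨?_, ?_, ?_⟩
  · rw [div_lt_div_iff₀ (by positivity) (by positivity)]
    -- goal : (a₂ - s₂) * (2*b₁) < (a₁ - s₁) * (2*b₂)
    have hM : 0 < a₁ * (2 * a₂ ^ 2 - 4 * b₂ * c₂ * τ) := by nlinarith
    have hPub : (a₂ - s₂) * (2 * a₂ ^ 2 - 4 * b₂ * c₂ * τ) + s₂ * (a₂ - s₂) ^ 2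
        = 4 * b₂ * c₂ * τ * a₂ := by linear_combination (s₂ - 2 * a₂) * hs₂sq
    have hPub' : (a₂ - s₂) * (2 * a₂ ^ 2 - 4 * b₂ * c₂ * τ) ≤ 4 * b₂ * c₂ * τ * a₂ := by
      nlinarith [mul_nonneg hs₂0 (sq_nonneg (a₂ - s₂))]
    have hQlb : 4 * b₁ * c₁ * τ ≤ (a₁ - s₁) * (2 * a₁) := by
      nlinarith [hf, sq_nonneg (a₁ - s₁)]
    rw [← mul_lt_mul_iff_of_pos_right hM]
    nlinarith [mul_le_mul_of_nonneg_left hPub' (show (0:ℝ) ≤ 2 * b₁ * a₁ by positivity),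
      mul_le_mul_of_nonneg_left hQlb
        (show (0:ℝ) ≤ b₂ * (2 * a₂ ^ 2 - 4 * b₂ * c₂ * τ) by nlinarith),
      mul_lt_mul_of_pos_left hT1' (show (0:ℝ) < 4 * b₁ * b₂ * τ by positivity)]
  · rw [div_lt_div_iff₀ (by positivity) (by positivity)]
    -- (a₁ - s₁) * (2*b₂) < (a₂ + s₂) * (2*b₁)
    rw [← mul_lt_mul_iff_of_pos_right ha₁]
    nlinarith [mul_le_mul_of_nonneg_left hQub (show (0:ℝ) ≤ 2 * b₂ by positivity),
      mul_lt_mul_of_pos_left hT2' (show (0:ℝ) < 2 * b₁ by positivity),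
      mul_nonneg (mul_nonneg (mul_nonneg (by norm_num : (0:ℝ) ≤ 2) hb₁.le) ha₁.le) hs₂0]
  · rw [div_lt_div_iff₀ (by positivity) (by positivity)]
    -- (a₂ + s₂) * (2*b₁) < (a₁ + s₁) * (2*b₂)
    rw [← mul_lt_mul_iff_of_pos_right ha₁]
    nlinarith [mul_le_mul_of_nonneg_left hQub (show (0:ℝ) ≤ 2 * b₂ by positivity),
      mul_lt_mul_of_pos_left hT3' (show (0:ℝ) < (4:ℝ) by norm_num),
      mul_le_mul_of_nonneg_left hs₂le
        (show (0:ℝ) ≤ 2 * b₁ * a₁ by positivity)]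

/-- Ordering of the roots `Z₁(f,τ) ≤ Z₂(f,τ)` of `u(a₁ − b₁u) = c₁τ` and
`Z₁(g,τ) ≤ Z₂(g,τ)` of `u(a₂ − b₂u) = c₂τ` for small `τ` (proof of Lemma 6.6). -/
theorem stmt_15 (a₁ a₂ b₁ b₂ c₁ c₂ : ℝ)
    (ha₁ : 0 < a₁) (ha₂ : 0 < a₂) (hb₁ : 0 < b₁) (hb₂ : 0 < b₂)
    (hc₁ : 0 < c₁) (hc₂ : 0 < c₂) :
    ∃ τhat > 0, ∀ τ : ℝ, τ ∈ Ioo 0 τhat →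
      4 * b₁ * c₁ * τ < a₁ ^ 2 → 4 * b₂ * c₂ * τ < a₂ ^ 2 →
      ((b₁ / b₂ < a₁ / a₂ ∧ a₁ / a₂ < c₁ / c₂ →
        (a₂ - Real.sqrt (a₂ ^ 2 - 4 * b₂ * c₂ * τ)) / (2 * b₂) <
          (a₁ - Real.sqrt (a₁ ^ 2 - 4 * b₁ * c₁ * τ)) / (2 * b₁) ∧
        (a₁ - Real.sqrt (a₁ ^ 2 - 4 * b₁ * c₁ * τ)) / (2 * b₁) <
          (a₂ + Real.sqrt (a₂ ^ 2 - 4 * b₂ * c₂ * τ)) / (2 * b₂) ∧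
        (a₂ + Real.sqrt (a₂ ^ 2 - 4 * b₂ * c₂ * τ)) / (2 * b₂) <
          (a₁ + Real.sqrt (a₁ ^ 2 - 4 * b₁ * c₁ * τ)) / (2 * b₁)) ∧
      (c₁ / c₂ < a₁ / a₂ ∧ a₁ / a₂ < b₁ / b₂ →
        (a₁ - Real.sqrt (a₁ ^ 2 - 4 * b₁ * c₁ * τ)) / (2 * b₁) <
          (a₂ - Real.sqrt (a₂ ^ 2 - 4 * b₂ * c₂ * τ)) / (2 * b₂) ∧
        (a₂ - Real.sqrt (a₂ ^ 2 - 4 * b₂ * c₂ * τ)) / (2 * b₂) <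
          (a₁ + Real.sqrt (a₁ ^ 2 - 4 * b₁ * c₁ * τ)) / (2 * b₁) ∧
        (a₁ + Real.sqrt (a₁ ^ 2 - 4 * b₁ * c₁ * τ)) / (2 * b₁) <
          (a₂ + Real.sqrt (a₂ ^ 2 - 4 * b₂ * c₂ * τ)) / (2 * b₂))) := by
  by_cases h1 : b₁ / b₂ < a₁ / a₂ ∧ a₁ / a₂ < c₁ / c₂
  · have hB : b₁ * a₂ < b₂ * a₁ := by
      have := (div_lt_div_iff₀ hb₂ ha₂).mp h1.1; linarith
    have hC : a₁ * c₂ < a₂ * c₁ := by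
      have := (div_lt_div_iff₀ ha₂ hc₂).mp h1.2; linarith
    obtain ⟨T, hT, hK⟩ := key_root_order a₁ a₂ b₁ b₂ c₁ c₂ ha₁ ha₂ hb₁ hb₂ hc₁ hc₂ hB hC
    exact ⟨T, hT, fun τ hτ hd1 hd2 =>
      ⟨fun _ => hK τ hτ hd1 hd2, fun h2 => absurd (h1.1.trans h2.2) (lt_irrefl _)⟩⟩
  · by_cases h2 : c₁ / c₂ < a₁ / a₂ ∧ a₁ / a₂ < b₁ / b₂
    · have hB : b₂ * a₁ < b₁ * a₂ := by
        have := (div_lt_div_iff₀ ha₂ hb₂).mp h2.2; linarith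
      have hC : a₂ * c₁ < a₁ * c₂ := by
        have := (div_lt_div_iff₀ hc₂ ha₂).mp h2.1; linarith
      obtain ⟨T, hT, hK⟩ := key_root_order a₂ a₁ b₂ b₁ c₂ c₁ ha₂ ha₁ hb₂ hb₁ hc₂ hc₁ hB hC
      exact ⟨T, hT, fun τ hτ hd1 hd2 => ⟨fun h => absurd h h1, fun _ => hK τ hτ hd2 hd1⟩⟩
    · exact ⟨1, one_pos, fun τ _ _ _ => ⟨fun h => absurd h h1, fun h => absurd h h2⟩⟩
end

section
/- Assume C < A < B or B < A < C (so that u* > 0 and v* > 0), and set τ* := u*·v*. Then u* · ∂h/∂u(u*, τ*) = (γb₂ + c₁)·τ* − b₁·(u*)² − γ·c₂·(v*)², and consequently ∂h/∂u(u*, τ*) > 0 if and only if D > 0. -/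
set_option maxHeartbeats 1000000 in
/-- Computation used in Lemma 6.8: with `τ* = u*v*`, one has
`u*·h_u(u*, τ*) = (γb₂ + c₁)τ* − b₁(u*)² − γc₂(v*)²`, and consequently
`h_u(u*, τ*) > 0` if and only if `D > 0`. -/
theorem stmt_17 (a₁ a₂ b₁ b₂ c₁ c₂ γ δ : ℝ)
    (ha₁ : 0 < a₁) (ha₂ : 0 < a₂) (hb₁ : 0 < b₁) (hb₂ : 0 < b₂)
    (hc₁ : 0 < c₁) (hc₂ : 0 < c₂) (hγ : 0 < γ) (hδ : 0 < δ)
    (hcase : (c₁ / c₂ < a₁ / a₂ ∧ a₁ / a₂ < b₁ / b₂) ∨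
             (b₁ / b₂ < a₁ / a₂ ∧ a₁ / a₂ < c₁ / c₂))
    (ustar vstar τstar hu : ℝ)
    (hustar : ustar = (a₁ * c₂ - a₂ * c₁) / (b₁ * c₂ - b₂ * c₁))
    (hvstar : vstar = (b₁ * a₂ - b₂ * a₁) / (b₁ * c₂ - b₂ * c₁))
    (hτstar : τstar = ustar * vstar)
    (hder : HasDerivAt (fun u => hfun a₁ a₂ b₁ b₂ c₁ c₂ γ u τstar) hu ustar) :
    ustar * hu =
      (γ * b₂ + c₁) * τstar - b₁ * ustar ^ 2 - γ * c₂ * vstar ^ 2 ∧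
    (0 < hu ↔
      0 < γ * b₂ * (a₁ / a₂ - b₁ / b₂) * (b₁ / b₂ + c₁ / c₂ - 2 * (a₁ / a₂)) +
          c₂ * (c₁ / c₂ - a₁ / a₂) *
            (a₁ / a₂ * (b₁ / b₂ + c₁ / c₂) - 2 * (b₁ / b₂) * (c₁ / c₂))) := by
  -- denominators
  have hden : b₁ * c₂ - b₂ * c₁ ≠ 0 := by
    rcases hcase with ⟨h1, h2⟩ | ⟨h1, h2⟩
    · have e1 := (div_lt_div_iff₀ hc₂ ha₂).mp h1
      have e2 := (div_lt_div_iff₀ ha₂ hb₂).mp h2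
      intro h; nlinarith
    · have e1 := (div_lt_div_iff₀ hb₂ ha₂).mp h1
      have e2 := (div_lt_div_iff₀ ha₂ hc₂).mp h2
      intro h; nlinarith
  have hupos : 0 < ustar := by
    rw [hustar]
    rcases hcase with ⟨h1, h2⟩ | ⟨h1, h2⟩
    · have e1 := (div_lt_div_iff₀ hc₂ ha₂).mp h1
      have e2 := (div_lt_div_iff₀ ha₂ hb₂).mp h2
      apply div_pos <;> nlinarith
    · have e1 := (div_lt_div_iff₀ hb₂ ha₂).mp h1
      have e2 := (div_lt_div_iff₀ ha₂ hc₂).mp h2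
      have hn : a₁ * c₂ - a₂ * c₁ < 0 := by nlinarith
      have hd : b₁ * c₂ - b₂ * c₁ < 0 := by nlinarith
      exact div_pos_of_neg_of_neg hn hd
  have hune : ustar ≠ 0 := ne_of_gt hupos
  -- equilibrium identities
  have heq1 : b₁ * ustar + c₁ * vstar = a₁ := by
    rw [hustar, hvstar]; generalize hd : b₁ * c₂ - b₂ * c₁ = d at hden ⊢; field_simp; subst hd; ring
  have heq2 : b₂ * ustar + c₂ * vstar = a₂ := by
    rw [hustar, hvstar]; generalize hd : b₁ * c₂ - b₂ * c₁ = d at hden ⊢; field_simp; subst hd; ring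
  -- compute the derivative explicitly
  have hinv : HasDerivAt (fun u : ℝ => u⁻¹) (-(ustar ^ 2)⁻¹) ustar := hasDerivAt_inv hune
  have hid : HasDerivAt (fun u : ℝ => u) 1 ustar := hasDerivAt_id ustar
  have h1 : HasDerivAt (fun u : ℝ => u * (a₁ - b₁ * u))
      (1 * (a₁ - b₁ * ustar) + ustar * (0 - b₁ * 1)) ustar :=
    hid.mul ((hasDerivAt_const _ _).sub (hid.const_mul b₁))
  have h2 : HasDerivAt (fun u : ℝ => γ * τstar * u⁻¹)
      (γ * τstar * (-(ustar ^ 2)⁻¹)) ustar := hinv.const_mul _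
  have h3 : HasDerivAt (fun u : ℝ => a₂ - b₂ * u - c₂ * τstar * u⁻¹)
      (0 - b₂ * 1 - c₂ * τstar * (-(ustar ^ 2)⁻¹)) ustar :=
    (((hasDerivAt_const _ _).sub (hid.const_mul b₂)).sub (hinv.const_mul _))
  have h4 : HasDerivAt (fun u : ℝ =>
      u * (a₁ - b₁ * u) - c₁ * τstar - (γ * τstar * u⁻¹) * (a₂ - b₂ * u - c₂ * τstar * u⁻¹))
      ((1 * (a₁ - b₁ * ustar) + ustar * (0 - b₁ * 1)) - 0 -
        ((γ * τstar * (-(ustar ^ 2)⁻¹)) * (a₂ - b₂ * ustar - c₂ * τstar * ustar⁻¹) +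
          (γ * τstar * ustar⁻¹) * (0 - b₂ * 1 - c₂ * τstar * (-(ustar ^ 2)⁻¹)))) ustar :=
    (h1.sub (hasDerivAt_const _ _)).sub (h2.mul h3)
  have h5 : HasDerivAt (fun u => hfun a₁ a₂ b₁ b₂ c₁ c₂ γ u τstar)
      ((1 * (a₁ - b₁ * ustar) + ustar * (0 - b₁ * 1)) - 0 -
        ((γ * τstar * (-(ustar ^ 2)⁻¹)) * (a₂ - b₂ * ustar - c₂ * τstar * ustar⁻¹) +
          (γ * τstar * ustar⁻¹) * (0 - b₂ * 1 - c₂ * τstar * (-(ustar ^ 2)⁻¹)))) ustar := by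
    convert h4 using 2 with u
    simp only [hfun]; ring
  have hueq : hu = (1 * (a₁ - b₁ * ustar) + ustar * (0 - b₁ * 1)) - 0 -
        ((γ * τstar * (-(ustar ^ 2)⁻¹)) * (a₂ - b₂ * ustar - c₂ * τstar * ustar⁻¹) +
          (γ * τstar * ustar⁻¹) * (0 - b₂ * 1 - c₂ * τstar * (-(ustar ^ 2)⁻¹))) :=
    hder.unique h5
  -- Part 1
  have part1 : ustar * hu =
      (γ * b₂ + c₁) * τstar - b₁ * ustar ^ 2 - γ * c₂ * vstar ^ 2 := by
    rw [hueq, hτstar]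
    field_simp
    linear_combination (-ustar) * heq1 + (-(γ * vstar)) * heq2
  refine ⟨part1, ?_⟩
  -- Part 2
  have hBC : b₁ / b₂ - c₁ / c₂ ≠ 0 := by
    intro h
    have hbc : b₁ / b₂ = c₁ / c₂ := by linarith
    have := (div_eq_div_iff hb₂.ne' hc₂.ne').mp hbc
    exact hden (by nlinarith)
  have hKpos : 0 < b₂ * c₂ * (b₁ / b₂ - c₁ / c₂) ^ 2 :=
    mul_pos (mul_pos hb₂ hc₂)
      ((sq_nonneg _).lt_of_ne (Ne.symm (pow_ne_zero 2 hBC)))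
  have hkey : ((γ * b₂ + c₁) * τstar - b₁ * ustar ^ 2 - γ * c₂ * vstar ^ 2) *
        (b₂ * c₂ * (b₁ / b₂ - c₁ / c₂) ^ 2) =
      (γ * b₂ * (a₁ / a₂ - b₁ / b₂) * (b₁ / b₂ + c₁ / c₂ - 2 * (a₁ / a₂)) +
          c₂ * (c₁ / c₂ - a₁ / a₂) *
            (a₁ / a₂ * (b₁ / b₂ + c₁ / c₂) - 2 * (b₁ / b₂) * (c₁ / c₂))) * a₂ ^ 2 := by
    rw [hτstar, hustar, hvstar]
    generalize hd : b₁ * c₂ - b₂ * c₁ = d at hden ⊢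
    field_simp
    subst hd
    ring
  have ha₂sq : (0:ℝ) < a₂ ^ 2 := pow_pos ha₂ 2
  constructor
  · intro h
    have hE : 0 < ustar * hu := mul_pos hupos h
    rw [part1] at hE
    have hP := mul_pos hE hKpos
    rw [hkey] at hP
    by_contra hle
    push_neg at hle
    nlinarith
  · intro h
    have hP : 0 < ((γ * b₂ + c₁) * τstar - b₁ * ustar ^ 2 - γ * c₂ * vstar ^ 2) *
        (b₂ * c₂ * (b₁ / b₂ - c₁ / c₂) ^ 2) := by
      rw [hkey]; exact mul_pos h ha₂sq
    have hE : 0 < ustar * hu := by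
      rw [part1]
      by_contra hle
      push_neg at hle
      nlinarith
    by_contra hle
    push_neg at hle
    nlinarith
end

section
/- Assume C < A < B or B < A < C, and assume D > 0. Set τ* := u*·v*. Then h(u*, τ*) = 0, and there exist real numbers z₁, z₃ with 0 < z₁ < u* < z₃ such that h(u, τ*) > 0 for all u ∈ (0, z₁) ∪ (u*, z₃) and h(u, τ*) < 0 for all u ∈ (z₁, u*) ∪ (z₃, ∞); that is, h(·, τ*) has exactly three positive zeros and u* is the middle one. -/
open Set

/-- A real cubic with nonzero leading coefficient cannot vanish at four distinct points. -/
lemma cubic_four_roots (α β c d x₁ x₂ x₃ x₄ : ℝ)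
    (h12 : x₁ < x₂) (h23 : x₂ < x₃) (h34 : x₃ < x₄)
    (e₁ : α*x₁^3 + β*x₁^2 + c*x₁ + d = 0)
    (e₂ : α*x₂^3 + β*x₂^2 + c*x₂ + d = 0)
    (e₃ : α*x₃^3 + β*x₃^2 + c*x₃ + d = 0)
    (e₄ : α*x₄^3 + β*x₄^2 + c*x₄ + d = 0) : α = 0 := by
  have key : α * ((x₂-x₁)*(x₃-x₁)*(x₄-x₁)*(x₃-x₂)*(x₄-x₂)*(x₄-x₃)) = 0 := by
    linear_combination (-(x₃-x₂)*(x₄-x₂)*(x₄-x₃)) * e₁ + ((x₃-x₁)*(x₄-x₁)*(x₄-x₃)) * e₂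
      + (-(x₂-x₁)*(x₄-x₁)*(x₄-x₂)) * e₃ + ((x₂-x₁)*(x₃-x₁)*(x₃-x₂)) * e₄
  have hp : 0 < (x₂-x₁)*(x₃-x₁)*(x₄-x₁)*(x₃-x₂)*(x₄-x₂)*(x₄-x₃) := by
    have a1 : 0 < x₂-x₁ := by linarith
    have a2 : 0 < x₃-x₁ := by linarith
    have a3 : 0 < x₄-x₁ := by linarith
    have a4 : 0 < x₃-x₂ := by linarith
    have a5 : 0 < x₄-x₂ := by linarith
    have a6 : 0 < x₄-x₃ := by linarith
    positivity
  rcases mul_eq_zero.mp key with h | h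
  · exact h
  · exact absurd h (ne_of_gt hp)

set_option maxHeartbeats 4000000 in
/-- First assertion of Lemma 6.8: if `C < A < B` or `B < A < C` and `D > 0`, then
with `τ* = u*v*` one has `h(u*, τ*) = 0` and `h(·, τ*)` has exactly three
positive zeros, `u*` being the middle one. -/
theorem stmt_18 (a₁ a₂ b₁ b₂ c₁ c₂ γ δ : ℝ)
    (ha₁ : 0 < a₁) (ha₂ : 0 < a₂) (hb₁ : 0 < b₁) (hb₂ : 0 < b₂)
    (hc₁ : 0 < c₁) (hc₂ : 0 < c₂) (hγ : 0 < γ) (hδ : 0 < δ)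
    (hcase : (c₁ / c₂ < a₁ / a₂ ∧ a₁ / a₂ < b₁ / b₂) ∨
             (b₁ / b₂ < a₁ / a₂ ∧ a₁ / a₂ < c₁ / c₂))
    (hD : 0 < γ * b₂ * (a₁ / a₂ - b₁ / b₂) * (b₁ / b₂ + c₁ / c₂ - 2 * (a₁ / a₂)) +
        c₂ * (c₁ / c₂ - a₁ / a₂) *
          (a₁ / a₂ * (b₁ / b₂ + c₁ / c₂) - 2 * (b₁ / b₂) * (c₁ / c₂)))
    (ustar vstar τstar : ℝ)
    (hustar : ustar = (a₁ * c₂ - a₂ * c₁) / (b₁ * c₂ - b₂ * c₁))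
    (hvstar : vstar = (b₁ * a₂ - b₂ * a₁) / (b₁ * c₂ - b₂ * c₁))
    (hτstar : τstar = ustar * vstar) :
    hfun a₁ a₂ b₁ b₂ c₁ c₂ γ ustar τstar = 0 ∧
    ∃ z₁ z₃ : ℝ, 0 < z₁ ∧ z₁ < ustar ∧ ustar < z₃ ∧
      (∀ u : ℝ, u ∈ Ioo 0 z₁ ∪ Ioo ustar z₃ →
        0 < hfun a₁ a₂ b₁ b₂ c₁ c₂ γ u τstar) ∧
      (∀ u : ℝ, u ∈ Ioo z₁ ustar ∪ Ioi z₃ →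
        hfun a₁ a₂ b₁ b₂ c₁ c₂ γ u τstar < 0) := by
  have hEne : b₁ * c₂ - b₂ * c₁ ≠ 0 := by
    rcases hcase with ⟨h1, h2⟩ | ⟨h1, h2⟩
    · have h3 : c₁ / c₂ < b₁ / b₂ := lt_trans h1 h2
      have := (div_lt_div_iff₀ hc₂ hb₂).mp h3
      intro h; nlinarith
    · have h3 : b₁ / b₂ < c₁ / c₂ := lt_trans h1 h2
      have := (div_lt_div_iff₀ hb₂ hc₂).mp h3
      intro h; nlinarith
  have hs : 0 < ustar := by
    rw [hustar]
    rcases hcase with ⟨h1, h2⟩ | ⟨h1, h2⟩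
    · have h3 := (div_lt_div_iff₀ hc₂ ha₂).mp h1
      have h4 := (div_lt_div_iff₀ hc₂ hb₂).mp (lt_trans h1 h2)
      apply div_pos <;> nlinarith
    · have h3 := (div_lt_div_iff₀ ha₂ hc₂).mp h2
      have h4 := (div_lt_div_iff₀ hb₂ hc₂).mp (lt_trans h1 h2)
      rw [div_pos_iff]; right; constructor <;> nlinarith
  have hw : 0 < vstar := by
    rw [hvstar]
    rcases hcase with ⟨h1, h2⟩ | ⟨h1, h2⟩
    · have h3 := (div_lt_div_iff₀ ha₂ hb₂).mp h2
      have h4 := (div_lt_div_iff₀ hc₂ hb₂).mp (lt_trans h1 h2)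
      apply div_pos <;> nlinarith
    · have h3 := (div_lt_div_iff₀ hb₂ ha₂).mp h1
      have h4 := (div_lt_div_iff₀ hb₂ hc₂).mp (lt_trans h1 h2)
      rw [div_pos_iff]; right; constructor <;> nlinarith
  have hsE : ustar * (b₁ * c₂ - b₂ * c₁) = a₁ * c₂ - a₂ * c₁ := by
    rw [hustar]; exact div_mul_cancel₀ _ hEne
  have hwE : vstar * (b₁ * c₂ - b₂ * c₁) = b₁ * a₂ - b₂ * a₁ := by
    rw [hvstar]; field_simp
  have ha1 : a₁ = b₁ * ustar + c₁ * vstar := by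
    have key : a₁ * (b₁ * c₂ - b₂ * c₁) = (b₁ * ustar + c₁ * vstar) * (b₁ * c₂ - b₂ * c₁) := by
      linear_combination (-b₁) * hsE + (-c₁) * hwE
    exact mul_right_cancel₀ hEne key
  have ha2 : a₂ = b₂ * ustar + c₂ * vstar := by
    have key : a₂ * (b₁ * c₂ - b₂ * c₁) = (b₂ * ustar + c₂ * vstar) * (b₁ * c₂ - b₂ * c₁) := by
      linear_combination (-b₂) * hsE + (-c₂) * hwE
    exact mul_right_cancel₀ hEne key
  have hexpr : 0 < -b₁ * ustar^2 + (c₁ + γ*b₂) * ustar * vstar - γ*c₂*vstar^2 := by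
    have hpoly : (-b₁ * ustar^2 + (c₁ + γ*b₂) * ustar * vstar - γ*c₂*vstar^2) * (b₁*c₂-b₂*c₁)^2
        = -b₁*(a₁*c₂-a₂*c₁)^2 + (c₁+γ*b₂)*(a₁*c₂-a₂*c₁)*(b₁*a₂-b₂*a₁) - γ*c₂*(b₁*a₂-b₂*a₁)^2 := by
      linear_combination
        (-b₁*(ustar*(b₁*c₂-b₂*c₁)+(a₁*c₂-a₂*c₁)) + (c₁+γ*b₂)*(vstar*(b₁*c₂-b₂*c₁))) * hsE +
        ((c₁+γ*b₂)*(a₁*c₂-a₂*c₁) - γ*c₂*(vstar*(b₁*c₂-b₂*c₁)+(b₁*a₂-b₂*a₁))) * hwE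
    have hDpoly : a₂^2 * b₂ * c₂ *
          (γ * b₂ * (a₁ / a₂ - b₁ / b₂) * (b₁ / b₂ + c₁ / c₂ - 2 * (a₁ / a₂)) +
          c₂ * (c₁ / c₂ - a₁ / a₂) *
            (a₁ / a₂ * (b₁ / b₂ + c₁ / c₂) - 2 * (b₁ / b₂) * (c₁ / c₂)))
        = -b₁*(a₁*c₂-a₂*c₁)^2 + (c₁+γ*b₂)*(a₁*c₂-a₂*c₁)*(b₁*a₂-b₂*a₁) - γ*c₂*(b₁*a₂-b₂*a₁)^2 := by
      field_simp
      ring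
    have hE2 : 0 < (b₁*c₂-b₂*c₁)^2 := by positivity
    have hpos : 0 < (-b₁ * ustar^2 + (c₁ + γ*b₂) * ustar * vstar - γ*c₂*vstar^2) * (b₁*c₂-b₂*c₁)^2 := by
      rw [hpoly, ← hDpoly]; positivity
    nlinarith
  obtain ⟨Q, hQdef⟩ : ∃ Q : ℝ → ℝ, Q = fun u =>
      -b₁*u^3 + c₁*vstar*u^2 + γ*b₂*ustar*vstar*u - γ*c₂*ustar*vstar^2 := ⟨_, rfl⟩
  have hQc : Continuous Q := by rw [hQdef]; fun_prop
  -- hfun relation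
  have hiden : ∀ u : ℝ, u ≠ 0 →
      hfun a₁ a₂ b₁ b₂ c₁ c₂ γ u τstar * u^2 = (u - ustar) * Q u := by
    intro u hu
    simp only [hfun, hQdef, hτstar, ha1, ha2]
    field_simp
    ring
  have hQ0 : Q 0 < 0 := by
    simp only [hQdef]
    nlinarith [mul_pos (mul_pos hγ hc₂) (mul_pos hs (mul_pos hw hw))]
  have hQs : 0 < Q ustar := by
    have : Q ustar = ustar * (-b₁ * ustar^2 + (c₁ + γ*b₂) * ustar * vstar - γ*c₂*vstar^2) := by
      simp only [hQdef]; ring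
    rw [this]; exact mul_pos hs hexpr
  -- tail bound
  obtain ⟨M, hMdef⟩ : ∃ M : ℝ, M = (c₁*vstar + γ*b₂*ustar*vstar)/b₁ + 1 + ustar := ⟨_, rfl⟩
  have hsM : ustar < M := by
    have : 0 ≤ (c₁*vstar + γ*b₂*ustar*vstar)/b₁ := by positivity
    linarith
  have htail : ∀ u : ℝ, M ≤ u → Q u < 0 := by
    intro u hu
    have h1 : (1:ℝ) ≤ u := by
      have : 0 ≤ (c₁*vstar + γ*b₂*ustar*vstar)/b₁ := by positivity
      linarith
    have h2 : c₁*vstar + γ*b₂*ustar*vstar < b₁*u := by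
      have hM1 : c₁*vstar + γ*b₂*ustar*vstar < b₁*M := by
        have hbM : b₁*M = (c₁*vstar + γ*b₂*ustar*vstar) + b₁*(1 + ustar) := by
          rw [hMdef]; field_simp; ring
        nlinarith [mul_pos hb₁ (show (0:ℝ) < 1 + ustar by linarith)]
      nlinarith
    have hu0 : (0:ℝ) < u := by linarith
    have husq : u ≤ u^2 := by nlinarith
    simp only [hQdef]
    nlinarith [mul_pos (mul_pos hγ hc₂) (mul_pos hs (mul_pos hw hw)),
      mul_lt_mul_of_pos_right h2 (show (0:ℝ) < u^2 by positivity),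
      mul_le_mul_of_nonneg_left husq
        (le_of_lt (mul_pos (mul_pos hγ hb₂) (mul_pos hs hw)))]
  -- negative-side positive value
  obtain ⟨N, hNdef⟩ : ∃ N : ℝ, N = (γ*b₂*ustar*vstar + γ*c₂*ustar*vstar^2)/b₁ + 1 := ⟨_, rfl⟩
  have hN1 : (1:ℝ) ≤ N := by
    have : 0 ≤ (γ*b₂*ustar*vstar + γ*c₂*ustar*vstar^2)/b₁ := by positivity
    linarith
  have hQN : 0 < Q (-N) := by
    have h2 : γ*b₂*ustar*vstar + γ*c₂*ustar*vstar^2 < b₁*N := by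
      have hbN : b₁*N = (γ*b₂*ustar*vstar + γ*c₂*ustar*vstar^2) + b₁ := by
        rw [hNdef]; field_simp
      linarith
    have hN0 : (0:ℝ) < N := by linarith
    have hNsq : N ≤ N^2 := by nlinarith [hN1, sq_nonneg (N-1)]
    have hN2 : (1:ℝ) ≤ N^2 := le_trans hN1 hNsq
    simp only [hQdef]
    nlinarith [mul_lt_mul_of_pos_right h2 (show (0:ℝ) < N^2 by positivity),
      mul_pos (mul_pos hc₁ hw) (mul_pos hN0 hN0),
      mul_le_mul_of_nonneg_left hNsq
        (le_of_lt (mul_pos (mul_pos hγ hb₂) (mul_pos hs hw))),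
      mul_le_mul_of_nonneg_left hN2
        (le_of_lt (mul_pos (mul_pos hγ hc₂) (mul_pos hs (mul_pos hw hw))))]
  -- roots
  obtain ⟨x₁, hx₁mem, hx₁⟩ : ∃ x ∈ Ioo (0:ℝ) ustar, Q x = 0 := by
    have h := intermediate_value_Ioo (le_of_lt hs) hQc.continuousOn
    obtain ⟨x, hx, hx0⟩ := h ⟨hQ0, hQs⟩
    exact ⟨x, hx, hx0⟩
  obtain ⟨x₃, hx₃mem, hx₃⟩ : ∃ x ∈ Ioo ustar M, Q x = 0 := by
    have h := intermediate_value_Ioo' (le_of_lt hsM) hQc.continuousOn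
    obtain ⟨x, hx, hx0⟩ := h ⟨htail M le_rfl, hQs⟩
    exact ⟨x, hx, hx0⟩
  obtain ⟨x₀, hx₀mem, hx₀⟩ : ∃ x ∈ Ioo (-N) (0:ℝ), Q x = 0 := by
    have h := intermediate_value_Ioo' (show -N ≤ 0 by linarith) hQc.continuousOn
    obtain ⟨x, hx, hx0⟩ := h ⟨hQ0, hQN⟩
    exact ⟨x, hx, hx0⟩
  -- Q cannot have 4 roots
  have hfour : ∀ y₁ y₂ y₃ y₄ : ℝ, y₁ < y₂ → y₂ < y₃ → y₃ < y₄ →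
      Q y₁ = 0 → Q y₂ = 0 → Q y₃ = 0 → Q y₄ = 0 → False := by
    intro y₁ y₂ y₃ y₄ h12 h23 h34 e1 e2 e3 e4
    simp only [hQdef] at e1 e2 e3 e4
    have : -b₁ = 0 := by
      apply cubic_four_roots (-b₁) (c₁*vstar) (γ*b₂*ustar*vstar) (-γ*c₂*ustar*vstar^2)
        y₁ y₂ y₃ y₄ h12 h23 h34
      · linear_combination e1
      · linear_combination e2
      · linear_combination e3
      · linear_combination e4
    linarith
  -- z₁ : sSup of roots in [0, ustar]
  have hK₁c : IsCompact ({u | Q u = 0} ∩ Icc 0 ustar) :=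
    isCompact_Icc.inter_left (isClosed_eq hQc continuous_const)
  have hK₁ne : ({u | Q u = 0} ∩ Icc 0 ustar).Nonempty :=
    ⟨x₁, hx₁, le_of_lt hx₁mem.1, le_of_lt hx₁mem.2⟩
  obtain ⟨z₁, hz₁def⟩ : ∃ z : ℝ, z = sSup ({u | Q u = 0} ∩ Icc 0 ustar) := ⟨_, rfl⟩
  have hz₁mem : z₁ ∈ {u | Q u = 0} ∩ Icc 0 ustar := hz₁def ▸ hK₁c.sSup_mem hK₁ne
  have hz₁root : Q z₁ = 0 := hz₁mem.1
  have hz₁max : ∀ u, Q u = 0 → 0 ≤ u → u ≤ ustar → u ≤ z₁ :=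
    fun u h1 h2 h3 => hz₁def ▸ le_csSup hK₁c.bddAbove ⟨h1, h2, h3⟩
  have hz₁pos : 0 < z₁ :=
    lt_of_lt_of_le hx₁mem.1 (hz₁max x₁ hx₁ (le_of_lt hx₁mem.1) (le_of_lt hx₁mem.2))
  have hz₁lt : z₁ < ustar := lt_of_le_of_ne hz₁mem.2.2 (fun h => by rw [h] at hz₁root; linarith)
  -- z₃ : sInf of roots in [ustar, M]
  have hK₃c : IsCompact ({u | Q u = 0} ∩ Icc ustar M) :=
    isCompact_Icc.inter_left (isClosed_eq hQc continuous_const)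
  have hK₃ne : ({u | Q u = 0} ∩ Icc ustar M).Nonempty :=
    ⟨x₃, hx₃, le_of_lt hx₃mem.1, le_of_lt hx₃mem.2⟩
  obtain ⟨z₃, hz₃def⟩ : ∃ z : ℝ, z = sInf ({u | Q u = 0} ∩ Icc ustar M) := ⟨_, rfl⟩
  have hz₃mem : z₃ ∈ {u | Q u = 0} ∩ Icc ustar M := hz₃def ▸ hK₃c.sInf_mem hK₃ne
  have hz₃root : Q z₃ = 0 := hz₃mem.1
  have hz₃gt : ustar < z₃ := lt_of_le_of_ne hz₃mem.2.1 (fun h => by rw [← h] at hz₃root; linarith)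
  have hz₃leM : z₃ ≤ M := hz₃mem.2.2
  have hz₃min : ∀ u, Q u = 0 → ustar ≤ u → u ≤ M → z₃ ≤ u :=
    fun u h1 h2 h3 => hz₃def ▸ csInf_le hK₃c.bddBelow ⟨h1, h2, h3⟩
  have hz₁z₃ : z₁ < z₃ := lt_trans hz₁lt hz₃gt
  have hx₀neg : x₀ < 0 := hx₀mem.2
  -- middle sign : Q > 0 on (z₁, z₃)
  have hmid : ∀ u : ℝ, z₁ < u → u < z₃ → 0 < Q u := by
    intro u hu1 hu3
    by_contra hcon
    push_neg at hcon
    rcases lt_or_eq_of_le hcon with hlt | heq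
    · -- Q u < 0
      rcases le_or_gt u ustar with hcase | hcase
      · have hus : u < ustar := lt_of_le_of_ne hcase (fun h => by rw [h] at hlt; linarith)
        obtain ⟨y, hy, hy0⟩ := intermediate_value_Ioo (le_of_lt hus) hQc.continuousOn ⟨hlt, hQs⟩
        exact absurd (hz₁max y hy0 (by linarith [hy.1, hz₁pos]) (le_of_lt hy.2))
          (not_le.mpr (lt_trans hu1 hy.1))
      · obtain ⟨y, hy, hy0⟩ := intermediate_value_Ioo' (le_of_lt hcase) hQc.continuousOn ⟨hlt, hQs⟩
        have : z₃ ≤ y := hz₃min y hy0 (le_of_lt hy.1) (le_of_lt (lt_trans hy.2 (lt_of_lt_of_le hu3 hz₃leM)))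
        linarith [hy.2]
    · -- Q u = 0
      rcases le_or_gt u ustar with hcase | hcase
      · exact absurd (hz₁max u heq (le_of_lt (lt_trans hz₁pos hu1)) hcase) (not_le.mpr hu1)
      · have : z₃ ≤ u := hz₃min u heq (le_of_lt hcase) (le_trans (le_of_lt hu3) hz₃leM)
        linarith
  -- low sign : Q < 0 on (0, z₁)
  have hlow : ∀ u : ℝ, 0 < u → u < z₁ → Q u < 0 := by
    intro u hu0 hu1
    by_contra hcon
    push_neg at hcon
    rcases lt_or_eq_of_le hcon with hlt | heq
    · obtain ⟨y, hy, hy0⟩ := intermediate_value_Ioo (le_of_lt hu0) hQc.continuousOn ⟨hQ0, hlt⟩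
      exact hfour x₀ y z₁ z₃ (lt_trans hx₀neg hy.1) (lt_trans hy.2 hu1) hz₁z₃ hx₀ hy0 hz₁root hz₃root
    · exact hfour x₀ u z₁ z₃ (lt_trans hx₀neg hu0) hu1 hz₁z₃ hx₀ heq.symm hz₁root hz₃root
  -- high sign : Q < 0 on (z₃, ∞)
  have hhigh : ∀ u : ℝ, z₃ < u → Q u < 0 := by
    intro u hu3
    rcases le_or_gt M u with hMu | huM
    · exact htail u hMu
    by_contra hcon
    push_neg at hcon
    rcases lt_or_eq_of_le hcon with hlt | heq
    · obtain ⟨y, hy, hy0⟩ := intermediate_value_Ioo' (le_of_lt huM) hQc.continuousOn ⟨htail M le_rfl, hlt⟩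
      exact hfour x₀ z₁ z₃ y (lt_trans hx₀neg hz₁pos) hz₁z₃ (lt_trans hu3 hy.1) hx₀ hz₁root hz₃root hy0
    · exact hfour x₀ z₁ z₃ u (lt_trans hx₀neg hz₁pos) hz₁z₃ hu3 hx₀ hz₁root hz₃root heq.symm
  -- assemble
  have hsne : ustar ≠ 0 := ne_of_gt hs
  constructor
  · have h := hiden ustar hsne
    have h2 : hfun a₁ a₂ b₁ b₂ c₁ c₂ γ ustar τstar * ustar^2 = 0 := by rw [h]; ring
    have hu2 : ustar^2 ≠ 0 := pow_ne_zero 2 hsne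
    exact (mul_eq_zero.mp h2).resolve_right hu2
  · refine ⟨z₁, z₃, hz₁pos, hz₁lt, hz₃gt, ?_, ?_⟩
    · intro u hu
      rcases hu with hu | hu
      · have hu0 : 0 < u := hu.1
        have hQu : Q u < 0 := hlow u hu.1 hu.2
        have husu : u - ustar < 0 := by linarith [hu.2, hz₁lt]
        have hid := hiden u (ne_of_gt hu0)
        nlinarith [mul_pos_of_neg_of_neg husu hQu, sq_nonneg u]
      · have hu0 : 0 < u := lt_trans hs hu.1
        have hQu : 0 < Q u := hmid u (lt_trans hz₁lt hu.1) hu.2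
        have husu : 0 < u - ustar := by linarith [hu.1]
        have hid := hiden u (ne_of_gt hu0)
        nlinarith [mul_pos husu hQu]
    · intro u hu
      rcases hu with hu | hu
      · have hu0 : 0 < u := lt_trans hz₁pos hu.1
        have hQu : 0 < Q u := hmid u hu.1 (lt_trans hu.2 hz₃gt)
        have husu : u - ustar < 0 := by linarith [hu.2]
        have hid := hiden u (ne_of_gt hu0)
        nlinarith [mul_neg_of_neg_of_pos husu hQu]
      · have hu3 : z₃ < u := hu
        have hu0 : 0 < u := lt_trans (lt_trans hz₁pos hz₁z₃) hu3
        have hQu : Q u < 0 := hhigh u hu3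
        have husu : 0 < u - ustar := by linarith [hz₃gt]
        have hid := hiden u (ne_of_gt hu0)
        nlinarith [mul_neg_of_pos_of_neg husu hQu]
end
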